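/- arXiv:2103.10058 — 3 statements merged into one kernel-verified Lean document; each statement's English description precedes it below -/
import Mathlib

section
/- Let Ṡ = ∏_{j=1}^m X_j − p_1(1 + ∑_{j=1}^m μ_j^{-1}Ẋ_j) and X = ∏_{j=1}^m X_j(X_j−1) − ∏_{j=1}^m X_j². Then E[Ṡ² X] = p_1( p_1∏_{j=1}^m(4+5μ_j+μ_j²) − ∏_{j=1}^m(1+7μ_j+6μ_j²+μ_j³) ) − 2p_1²( p_1∏_{j=1}^m(2+μ_j) − ∏_{j=1}^m(1+3μ_j+μ_j²) ) − 2p_1²( p_1∑_{j=1}^m μ_j^{-1}(4+3μ_j)∏_{k≠j}(2+μ_k) − ∑_{j=1}^m μ_j^{-1}(1+6μ_j+3μ_j²)∏_{k≠j}(1+3μ_k+μ_k²) ) + p_1³( p_1 − ∏_{j=1}^m(1+μ_j) ) + 2p_1³( 2p_1 s_1 − ∑_{j=1}^m μ_j^{-1}(1+2μ_j)∏_{k≠j}(1+μ_k) ) + p_1³( p_1 s_1(4s_1+1) − ∑_{j=1}^m μ_j^{-2}(1+5μ_j+μ_j²)∏_{k≠j}(1+μ_k) − ∑_{j≠k} μ_j^{-1}μ_k^{-1}(1+2μ_j)(1+2μ_k)∏_{l∉{j,k}}(1+μ_l)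 ). -/
open MeasureTheory ProbabilityTheory Finset
open scoped NNReal

/-- The law of `m` independent Poisson random variables `X_j ~ Poisson (μ j)`,
as a product measure on `Fin m → ℕ`. -/
noncomputable def poissonPi {m : ℕ} (μ : Fin m → ℝ≥0) : Measure (Fin m → ℕ) :=
  Measure.pi fun j => poissonMeasure (μ j)

open scoped Nat ENNReal

lemma cast_descF (n k : ℕ) : ((n.descFactorial k : ℕ) : ℝ) = ∏ i ∈ Finset.range k, ((n:ℝ) - i) := by
  rcases le_or_gt k n with h | h
  · rw [Nat.descFactorial_eq_prod_range, Nat.cast_prod]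
    refine Finset.prod_congr rfl fun i hi => ?_
    rw [Nat.cast_sub (le_trans (Nat.le_of_lt_succ (Nat.lt_succ_of_lt (Finset.mem_range.mp hi))) h)]
  · rw [Nat.descFactorial_eq_zero_iff_lt.mpr h, Nat.cast_zero]
    exact (Finset.prod_eq_zero (Finset.mem_range.mpr h) (by simp)).symm

lemma hasSum_descF (r : ℝ) (k : ℕ) :
    HasSum (fun n : ℕ => (n.descFactorial k : ℝ) * r ^ n / (n ! : ℝ)) (r ^ k * Real.exp r) := by
  have h0 : ∀ i ∈ Finset.range k, (i.descFactorial k : ℝ) * r ^ i / i ! = 0 := by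
    intro i hi
    rw [Nat.descFactorial_eq_zero_iff_lt.mpr (Finset.mem_range.mp hi), Nat.cast_zero, zero_mul,
      zero_div]
  have hexp : HasSum (fun n : ℕ => r ^ k * (r ^ n / (n ! : ℝ))) (r ^ k * Real.exp r) := by
    have := NormedSpace.expSeries_div_hasSum_exp r
    rw [← Real.exp_eq_exp_ℝ] at this
    exact this.mul_left _
  have key : (fun n : ℕ => ((n + k).descFactorial k : ℝ) * r ^ (n + k) / ((n + k)! : ℝ))
      = fun n : ℕ => r ^ k * (r ^ n / (n ! : ℝ)) := by
    funext n
    have h1 : ((n + k)! : ℝ) = (n ! : ℝ) * ((n + k).descFactorial k : ℝ) := by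
      rw [Nat.add_descFactorial_eq_ascFactorial, ← Nat.cast_mul, Nat.factorial_mul_ascFactorial]
    have h2 : ((n + k).descFactorial k : ℝ) ≠ 0 := by
      have : ¬ (n + k < k) := by omega
      exact_mod_cast fun h => this (Nat.descFactorial_eq_zero_iff_lt.mp (by exact_mod_cast h))
    have h3 : (n ! : ℝ) ≠ 0 := by exact_mod_cast (Nat.factorial_pos n).ne'
    rw [h1, pow_add]
    field_simp
  have := (hasSum_nat_add_iff (f := fun n : ℕ => (n.descFactorial k : ℝ) * r ^ n / (n ! : ℝ)) k).mp
    (key ▸ hexp)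
  simpa [Finset.sum_congr rfl h0] using this

lemma pois_toReal (r : ℝ≥0) (n : ℕ) : (poissonPMF r n).toReal = poissonPMFReal r n :=
  ENNReal.toReal_ofReal poissonPMFReal_nonneg

lemma hasSum_pois_descF (r : ℝ≥0) (k : ℕ) :
    HasSum (fun n : ℕ => poissonPMFReal r n * (n.descFactorial k : ℝ)) ((r:ℝ) ^ k) := by
  have h := (hasSum_descF (r:ℝ) k).mul_left (Real.exp (-(r:ℝ)))
  have he : Real.exp (-(r:ℝ)) * ((r:ℝ) ^ k * Real.exp (r:ℝ)) = (r:ℝ) ^ k := by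
    rw [Real.exp_neg]
    field_simp
  rw [he] at h
  refine h.congr_fun fun n => ?_
  unfold poissonPMFReal
  ring

lemma integrable_of_summable_pois {r : ℝ≥0} {f : ℕ → ℝ}
    (h : Summable fun n => poissonPMFReal r n * |f n|) : Integrable f (poissonMeasure r) := by
  constructor
  · exact (measurable_from_top).aestronglyMeasurable
  · rw [HasFiniteIntegral, lintegral_countable']
    have heq : ∀ n : ℕ, ‖f n‖ₑ * (poissonMeasure r) {n}
        = ENNReal.ofReal (poissonPMFReal r n * |f n|) := by
      intro n
      rw [show (poissonMeasure r) {n} = poissonPMF r n from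
        (poissonMeasure_singleton r n).trans (poissonPMFReal_ofReal_eq_poissonPMF r n)]
      rw [show (poissonPMF r) n = ENNReal.ofReal (poissonPMFReal r n) from rfl]
      rw [← ofReal_norm_eq_enorm, Real.norm_eq_abs,
        ← ENNReal.ofReal_mul (abs_nonneg _), mul_comm]
    rw [tsum_congr heq, ← ENNReal.ofReal_tsum_of_nonneg
      (fun n => mul_nonneg poissonPMFReal_nonneg (abs_nonneg _)) h]
    exact ENNReal.ofReal_lt_top

lemma integrable_descF (r : ℝ≥0) (k : ℕ) :
    Integrable (fun n : ℕ => (n.descFactorial k : ℝ)) (poissonMeasure r) := by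
  refine integrable_of_summable_pois ((hasSum_pois_descF r k).summable.congr fun n => ?_)
  rw [abs_of_nonneg (by positivity)]

lemma integral_descF (r : ℝ≥0) (k : ℕ) :
    ∫ n : ℕ, (n.descFactorial k : ℝ) ∂(poissonMeasure r) = (r:ℝ) ^ k := by
  rw [integral_poissonMeasure' (integrable_descF r k)]
  rw [← (hasSum_pois_descF r k).tsum_eq]
  exact tsum_congr fun n => by rw [smul_eq_mul]; rfl

lemma quartic (r : ℝ≥0) (f : ℕ → ℝ) (c0 c1 c2 c3 c4 : ℝ)
    (hf : ∀ n : ℕ, f n = c0 + c1*(n:ℝ) + c2*(n:ℝ)^2 + c3*(n:ℝ)^3 + c4*(n:ℝ)^4) :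
    Integrable f (poissonMeasure r) ∧
    ∫ n : ℕ, f n ∂(poissonMeasure r) = c0 + c1*(r:ℝ) + c2*((r:ℝ)+(r:ℝ)^2)
      + c3*((r:ℝ)+3*(r:ℝ)^2+(r:ℝ)^3) + c4*((r:ℝ)+7*(r:ℝ)^2+6*(r:ℝ)^3+(r:ℝ)^4) := by
  set b : Fin 5 → ℝ := ![c0, c1+c2+c3+c4, c2+3*c3+7*c4, c3+6*c4, c4] with hb
  have hfd : f = fun n => ∑ i : Fin 5, b i * (n.descFactorial i : ℝ) := by
    funext n
    rw [hf n, Fin.sum_univ_five]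
    simp only [hb, Matrix.cons_val_zero, Matrix.cons_val_one, Matrix.head_cons,
      Matrix.cons_val_two, Matrix.tail_cons, Matrix.cons_val_three, Matrix.cons_val_four]
    simp only [show ((0:Fin 5):ℕ) = 0 from rfl, show ((1:Fin 5):ℕ) = 1 from rfl, show ((2:Fin 5):ℕ) = 2 from rfl, show ((3:Fin 5):ℕ) = 3 from rfl, show ((4:Fin 5):ℕ) = 4 from rfl]
    rw [cast_descF n 0, cast_descF n 1, cast_descF n 2, cast_descF n 3, cast_descF n 4]
    simp only [Finset.prod_range_succ, Finset.prod_range_zero, Fin.isValue]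
    push_cast
    ring
  have hI : ∀ i : Fin 5, Integrable (fun n : ℕ => b i * (n.descFactorial (i:ℕ) : ℝ))
      (poissonMeasure r) := fun i => (integrable_descF r i).const_mul (b i)
  constructor
  · rw [hfd]; exact integrable_finset_sum _ fun i _ => hI i
  · rw [hfd, integral_finset_sum _ fun i _ => hI i]
    have : ∀ i : Fin 5, ∫ n : ℕ, b i * (n.descFactorial (i:ℕ) : ℝ) ∂(poissonMeasure r)
        = b i * (r:ℝ) ^ (i:ℕ) := fun i => by rw [integral_const_mul, integral_descF]
    rw [Fin.sum_univ_five]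
    rw [this 0, this 1, this 2, this 3, this 4]
    simp only [hb, Matrix.cons_val_zero, Matrix.cons_val_one, Matrix.head_cons,
      Matrix.cons_val_two, Matrix.tail_cons, Matrix.cons_val_three, Matrix.cons_val_four]
    simp only [show ((0:Fin 5):ℕ) = 0 from rfl, show ((1:Fin 5):ℕ) = 1 from rfl, show ((2:Fin 5):ℕ) = 2 from rfl, show ((3:Fin 5):ℕ) = 3 from rfl, show ((4:Fin 5):ℕ) = 4 from rfl]
    push_cast
    ring



lemma integral_poissonPi_prod {m : ℕ} (μ : Fin m → ℝ≥0) (f : Fin m → ℕ → ℝ)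
    (hf : ∀ j, Integrable (f j) (poissonMeasure (μ j))) :
    Integrable (fun x : Fin m → ℕ => ∏ j, f j (x j)) (poissonPi μ) ∧
    ∫ x : Fin m → ℕ, ∏ j, f j (x j) ∂(poissonPi μ)
      = ∏ j, ∫ y, f j y ∂(poissonMeasure (μ j)) := by
  have h1 := MeasureTheory.integral_fintype_prod_eq_prod (E := fun _ : Fin m => ℕ) f
    (μ := fun i => poissonMeasure (μ i))
  have h2 := MeasureTheory.Integrable.fintype_prod_dep (E := fun _ : Fin m => ℕ) (f := f)
    (μ := fun i => poissonMeasure (μ i)) hf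
  exact ⟨h2, h1⟩

lemma plain_term {m : ℕ} (μ : Fin m → ℝ≥0) (g : ℕ → ℝ) (vg : Fin m → ℝ)
    (hg : ∀ l, Integrable g (poissonMeasure (μ l)) ∧
      ∫ n : ℕ, g n ∂(poissonMeasure (μ l)) = vg l) :
    Integrable (fun x : Fin m → ℕ => ∏ l, g (x l)) (poissonPi μ) ∧
    ∫ x : Fin m → ℕ, ∏ l, g (x l) ∂(poissonPi μ) = ∏ l, vg l := by
  obtain ⟨hInt, hEq⟩ := integral_poissonPi_prod μ (fun _ => g) (fun l => (hg l).1)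
  exact ⟨hInt, by rw [hEq]; exact Finset.prod_congr rfl fun l _ => (hg l).2⟩

lemma single_term {m : ℕ} (μ : Fin m → ℝ≥0) (g h : ℕ → ℝ) (vg : Fin m → ℝ) (vh : ℝ) (j : Fin m)
    (hgh : ∀ n : ℕ, h n = ((n:ℝ) - (μ j:ℝ)) * g n)
    (hg : ∀ l, Integrable g (poissonMeasure (μ l)) ∧
      ∫ n : ℕ, g n ∂(poissonMeasure (μ l)) = vg l)
    (hh : Integrable h (poissonMeasure (μ j)) ∧ ∫ n : ℕ, h n ∂(poissonMeasure (μ j)) = vh) :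
    Integrable (fun x : Fin m → ℕ => ((x j:ℝ) - (μ j:ℝ)) * ∏ l, g (x l)) (poissonPi μ) ∧
    ∫ x : Fin m → ℕ, ((x j:ℝ) - (μ j:ℝ)) * ∏ l, g (x l) ∂(poissonPi μ)
      = vh * ∏ l ∈ Finset.univ.erase j, vg l := by
  classical
  set F : Fin m → ℕ → ℝ := fun l n => if l = j then h n else g n with hF
  have hkey : (fun x : Fin m → ℕ => ((x j:ℝ) - (μ j:ℝ)) * ∏ l, g (x l))
      = fun x => ∏ l, F l (x l) := by
    funext x
    rw [← Finset.mul_prod_erase Finset.univ (fun l => F l (x l)) (Finset.mem_univ j),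
      ← Finset.mul_prod_erase Finset.univ (fun l => g (x l)) (Finset.mem_univ j)]
    have h1 : F j (x j) = ((x j:ℝ) - (μ j:ℝ)) * g (x j) := by
      rw [hF]; simp only [if_pos rfl]; exact hgh (x j)
    have h2 : ∏ l ∈ Finset.univ.erase j, F l (x l) = ∏ l ∈ Finset.univ.erase j, g (x l) :=
      Finset.prod_congr rfl fun l hl => by
        rw [hF]; simp only [if_neg (Finset.ne_of_mem_erase hl)]
    rw [h1, h2]; ring
  have hIF : ∀ l, Integrable (F l) (poissonMeasure (μ l)) := by
    intro l
    by_cases hlj : l = j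
    · subst hlj; simpa only [hF, if_pos rfl, ite_true] using hh.1
    · simpa only [hF, if_neg hlj] using (hg l).1
  obtain ⟨hInt, hEq⟩ := integral_poissonPi_prod μ F hIF
  rw [hkey]
  refine ⟨hInt, ?_⟩
  rw [hEq, ← Finset.mul_prod_erase Finset.univ (fun l => ∫ n : ℕ, F l n ∂(poissonMeasure (μ l)))
    (Finset.mem_univ j)]
  have h1 : ∫ n : ℕ, F j n ∂(poissonMeasure (μ j)) = vh := by
    simp only [hF, if_pos rfl]; exact hh.2
  have h2 : ∏ l ∈ Finset.univ.erase j, (∫ n : ℕ, F l n ∂(poissonMeasure (μ l)))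
      = ∏ l ∈ Finset.univ.erase j, vg l :=
    Finset.prod_congr rfl fun l hl => by
      simp only [hF, if_neg (Finset.ne_of_mem_erase hl)]; exact (hg l).2
  rw [h1, h2]

lemma diag_term {m : ℕ} (μ : Fin m → ℝ≥0) (g h : ℕ → ℝ) (vg : Fin m → ℝ) (vh : ℝ) (j : Fin m)
    (hgh : ∀ n : ℕ, h n = ((n:ℝ) - (μ j:ℝ)) * (((n:ℝ) - (μ j:ℝ)) * g n))
    (hg : ∀ l, Integrable g (poissonMeasure (μ l)) ∧
      ∫ n : ℕ, g n ∂(poissonMeasure (μ l)) = vg l)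
    (hh : Integrable h (poissonMeasure (μ j)) ∧ ∫ n : ℕ, h n ∂(poissonMeasure (μ j)) = vh) :
    Integrable (fun x : Fin m → ℕ => ((x j:ℝ) - (μ j:ℝ)) * (((x j:ℝ) - (μ j:ℝ)) * ∏ l, g (x l)))
      (poissonPi μ) ∧
    ∫ x : Fin m → ℕ, ((x j:ℝ) - (μ j:ℝ)) * (((x j:ℝ) - (μ j:ℝ)) * ∏ l, g (x l)) ∂(poissonPi μ)
      = vh * ∏ l ∈ Finset.univ.erase j, vg l := by
  classical
  set F : Fin m → ℕ → ℝ := fun l n => if l = j then h n else g n with hF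
  have hkey : (fun x : Fin m → ℕ => ((x j:ℝ) - (μ j:ℝ)) * (((x j:ℝ) - (μ j:ℝ)) * ∏ l, g (x l)))
      = fun x => ∏ l, F l (x l) := by
    funext x
    rw [← Finset.mul_prod_erase Finset.univ (fun l => F l (x l)) (Finset.mem_univ j),
      ← Finset.mul_prod_erase Finset.univ (fun l => g (x l)) (Finset.mem_univ j)]
    have h1 : F j (x j) = ((x j:ℝ) - (μ j:ℝ)) * (((x j:ℝ) - (μ j:ℝ)) * g (x j)) := by
      rw [hF]; simp only [if_pos rfl]; exact hgh (x j)
    have h2 : ∏ l ∈ Finset.univ.erase j, F l (x l) = ∏ l ∈ Finset.univ.erase j, g (x l) :=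
      Finset.prod_congr rfl fun l hl => by
        rw [hF]; simp only [if_neg (Finset.ne_of_mem_erase hl)]
    rw [h1, h2]; ring
  have hIF : ∀ l, Integrable (F l) (poissonMeasure (μ l)) := by
    intro l
    by_cases hlj : l = j
    · subst hlj; simpa only [hF, if_pos rfl, ite_true] using hh.1
    · simpa only [hF, if_neg hlj] using (hg l).1
  obtain ⟨hInt, hEq⟩ := integral_poissonPi_prod μ F hIF
  rw [hkey]
  refine ⟨hInt, ?_⟩
  rw [hEq, ← Finset.mul_prod_erase Finset.univ (fun l => ∫ n : ℕ, F l n ∂(poissonMeasure (μ l)))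
    (Finset.mem_univ j)]
  have h1 : ∫ n : ℕ, F j n ∂(poissonMeasure (μ j)) = vh := by
    simp only [hF, if_pos rfl]; exact hh.2
  have h2 : ∏ l ∈ Finset.univ.erase j, (∫ n : ℕ, F l n ∂(poissonMeasure (μ l)))
      = ∏ l ∈ Finset.univ.erase j, vg l :=
    Finset.prod_congr rfl fun l hl => by
      simp only [hF, if_neg (Finset.ne_of_mem_erase hl)]; exact (hg l).2
  rw [h1, h2]

lemma pair_term {m : ℕ} (μ : Fin m → ℝ≥0) (g hj hk : ℕ → ℝ) (vg : Fin m → ℝ) (vhj vhk : ℝ)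
    (j k : Fin m) (hjk : k ≠ j)
    (hghj : ∀ n : ℕ, hj n = ((n:ℝ) - (μ j:ℝ)) * g n)
    (hghk : ∀ n : ℕ, hk n = ((n:ℝ) - (μ k:ℝ)) * g n)
    (hg : ∀ l, Integrable g (poissonMeasure (μ l)) ∧
      ∫ n : ℕ, g n ∂(poissonMeasure (μ l)) = vg l)
    (hhj : Integrable hj (poissonMeasure (μ j)) ∧ ∫ n : ℕ, hj n ∂(poissonMeasure (μ j)) = vhj)
    (hhk : Integrable hk (poissonMeasure (μ k)) ∧ ∫ n : ℕ, hk n ∂(poissonMeasure (μ k)) = vhk) :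
    Integrable (fun x : Fin m → ℕ =>
      ((x j:ℝ) - (μ j:ℝ)) * (((x k:ℝ) - (μ k:ℝ)) * ∏ l, g (x l))) (poissonPi μ) ∧
    ∫ x : Fin m → ℕ, ((x j:ℝ) - (μ j:ℝ)) * (((x k:ℝ) - (μ k:ℝ)) * ∏ l, g (x l)) ∂(poissonPi μ)
      = vhj * (vhk * ∏ l ∈ (Finset.univ.erase j).erase k, vg l) := by
  classical
  have hkj : k ∈ Finset.univ.erase j := Finset.mem_erase.mpr ⟨hjk, Finset.mem_univ k⟩
  set F : Fin m → ℕ → ℝ := fun l n => if l = j then hj n else if l = k then hk n else g n with hF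
  have hsplit : ∀ (f : Fin m → ℝ), ∏ l, f l = f j * (f k * ∏ l ∈ (Finset.univ.erase j).erase k, f l) := by
    intro f
    rw [← Finset.mul_prod_erase Finset.univ f (Finset.mem_univ j),
      ← Finset.mul_prod_erase (Finset.univ.erase j) f hkj]
  have hkey : (fun x : Fin m → ℕ =>
      ((x j:ℝ) - (μ j:ℝ)) * (((x k:ℝ) - (μ k:ℝ)) * ∏ l, g (x l)))
      = fun x => ∏ l, F l (x l) := by
    funext x
    rw [hsplit (fun l => F l (x l)), hsplit (fun l => g (x l))]
    have h1 : F j (x j) = ((x j:ℝ) - (μ j:ℝ)) * g (x j) := by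
      rw [hF]; simp only [if_pos rfl]; exact hghj (x j)
    have h2 : F k (x k) = ((x k:ℝ) - (μ k:ℝ)) * g (x k) := by
      rw [hF]; simp only [if_neg hjk, if_pos rfl]; exact hghk (x k)
    have h3 : ∏ l ∈ (Finset.univ.erase j).erase k, F l (x l)
        = ∏ l ∈ (Finset.univ.erase j).erase k, g (x l) :=
      Finset.prod_congr rfl fun l hl => by
        have hl1 := Finset.ne_of_mem_erase hl
        have hl2 := Finset.ne_of_mem_erase (Finset.mem_of_mem_erase hl)
        rw [hF]; simp only [if_neg hl2, if_neg hl1]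
    rw [h1, h2, h3]; ring
  have hIF : ∀ l, Integrable (F l) (poissonMeasure (μ l)) := by
    intro l
    by_cases hlj : l = j
    · subst hlj; simpa only [hF, if_pos rfl, ite_true] using hhj.1
    · by_cases hlk : l = k
      · subst hlk; simpa only [hF, if_neg hlj, if_pos rfl, ite_true] using hhk.1
      · simpa only [hF, if_neg hlj, if_neg hlk] using (hg l).1
  obtain ⟨hInt, hEq⟩ := integral_poissonPi_prod μ F hIF
  rw [hkey]
  refine ⟨hInt, ?_⟩
  rw [hEq, hsplit (fun l => ∫ n : ℕ, F l n ∂(poissonMeasure (μ l)))]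
  have h1 : ∫ n : ℕ, F j n ∂(poissonMeasure (μ j)) = vhj := by
    simp only [hF, if_pos rfl]; exact hhj.2
  have h2 : ∫ n : ℕ, F k n ∂(poissonMeasure (μ k)) = vhk := by
    simp only [hF, if_neg hjk, if_pos rfl]; exact hhk.2
  have h3 : ∏ l ∈ (Finset.univ.erase j).erase k, (∫ n : ℕ, F l n ∂(poissonMeasure (μ l)))
      = ∏ l ∈ (Finset.univ.erase j).erase k, vg l :=
    Finset.prod_congr rfl fun l hl => by
      have hl1 := Finset.ne_of_mem_erase hl
      have hl2 := Finset.ne_of_mem_erase (Finset.mem_of_mem_erase hl)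
      simp only [hF, if_neg hl2, if_neg hl1]; exact (hg l).2
  rw [h1, h2, h3]




lemma pmom (r : ℝ≥0) (f : ℕ → ℝ) (c0 c1 c2 c3 c4 V : ℝ)
    (hf : ∀ n : ℕ, f n = c0 + c1*(n:ℝ) + c2*(n:ℝ)^2 + c3*(n:ℝ)^3 + c4*(n:ℝ)^4)
    (hV : V = c0 + c1*(r:ℝ) + c2*((r:ℝ)+(r:ℝ)^2) + c3*((r:ℝ)+3*(r:ℝ)^2+(r:ℝ)^3)
      + c4*((r:ℝ)+7*(r:ℝ)^2+6*(r:ℝ)^3+(r:ℝ)^4)) :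
    Integrable f (poissonMeasure r) ∧ ∫ n : ℕ, f n ∂(poissonMeasure r) = V := by
  obtain ⟨h1, h2⟩ := quartic r f c0 c1 c2 c3 c4 hf
  exact ⟨h1, by rw [h2, hV]⟩

def gA2 : ℕ → ℝ := fun n => (n:ℝ)^2*((n:ℝ)*((n:ℝ)-1))
def gB2 : ℕ → ℝ := fun n => (n:ℝ)^2*(n:ℝ)^2
def gA1 : ℕ → ℝ := fun n => (n:ℝ)*((n:ℝ)*((n:ℝ)-1))
def gB1 : ℕ → ℝ := fun n => (n:ℝ)*(n:ℝ)^2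
def gA0 : ℕ → ℝ := fun n => (n:ℝ)*((n:ℝ)-1)
def gB0 : ℕ → ℝ := fun n => (n:ℝ)^2
def sp (t : ℝ) (g : ℕ → ℝ) : ℕ → ℝ := fun n => ((n:ℝ) - t) * g n
def sp2 (t : ℝ) (g : ℕ → ℝ) : ℕ → ℝ := fun n => ((n:ℝ) - t) * (((n:ℝ) - t) * g n)

lemma mul_sum_sum {α β : Type*} (s : Finset α) (t : α → Finset β) (f : α → β → ℝ) (c : ℝ) :
    c * ∑ j ∈ s, ∑ k ∈ t j, f j k = ∑ j ∈ s, ∑ k ∈ t j, c * f j k := by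
  rw [Finset.mul_sum]; exact Finset.sum_congr rfl fun j _ => Finset.mul_sum _ _ _

theorem expectation_Sdot_sq_X (m : ℕ) (hm : 2 ≤ m) (μ : Fin m → ℝ≥0) (hμ : ∀ j, 0 < μ j) :
    ∫ x : Fin m → ℕ, (∏ j, (x j : ℝ) - (∏ j, (μ j : ℝ)) * (1 + ∑ j, ((μ j : ℝ))⁻¹ * ((x j : ℝ) - (μ j : ℝ)))) ^ 2 * (∏ j, ((x j : ℝ) * ((x j : ℝ) - 1)) - ∏ j, (x j : ℝ) ^ 2) ∂(poissonPi μ)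
      = (∏ j, (μ j : ℝ)) * ((∏ j, (μ j : ℝ)) * ∏ j, (4 + 5 * (μ j : ℝ) + (μ j : ℝ) ^ 2) - ∏ j, (1 + 7 * (μ j : ℝ) + 6 * (μ j : ℝ) ^ 2 + (μ j : ℝ) ^ 3)) - 2 * (∏ j, (μ j : ℝ)) ^ 2 * ((∏ j, (μ j : ℝ)) * ∏ j, (2 + (μ j : ℝ)) - ∏ j, (1 + 3 * (μ j : ℝ) + (μ j : ℝ) ^ 2)) - 2 * (∏ j, (μ j : ℝ)) ^ 2 * ((∏ j, (μ j : ℝ)) * ∑ j, ((μ j : ℝ))⁻¹ * (4 + 3 * (μ j : ℝ)) * ∏ k ∈ univ.erase j, (2 + (μ k : ℝ)) - ∑ j, ((μ j : ℝ))⁻¹ * (1 + 6 * (μ j : ℝ) + 3 * (μ j : ℝ) ^ 2) * ∏ k ∈ univ.erase j, (1 + 3 * (μ k : ℝ) + (μ k : ℝ) ^ 2)) + (∏ j, (μ j : ℝ)) ^ 3 * ((∏ j, (μ j : ℝ)) - ∏ j, (1 + (μ j : ℝ))) + 2 * (∏ j, (μ j : ℝ)) ^ 3 * (2 * (∏ j,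 (μ j : ℝ)) * (∑ j, ((μ j : ℝ))⁻¹) - ∑ j, ((μ j : ℝ))⁻¹ * (1 + 2 * (μ j : ℝ)) * ∏ k ∈ univ.erase j, (1 + (μ k : ℝ))) + (∏ j, (μ j : ℝ)) ^ 3 * ((∏ j, (μ j : ℝ)) * (∑ j, ((μ j : ℝ))⁻¹) * (4 * (∑ j, ((μ j : ℝ))⁻¹) + 1) - ∑ j, ((μ j : ℝ))⁻¹ ^ 2 * (1 + 5 * (μ j : ℝ) + (μ j : ℝ) ^ 2) * ∏ k ∈ univ.erase j, (1 + (μ k : ℝ)) - ∑ j, ∑ k ∈ univ.erase j, ((μ j : ℝ))⁻¹ * ((μ k : ℝ))⁻¹ * (1 + 2 * (μ j : ℝ)) * (1 + 2 * (μ k : ℝ)) * ∏ l ∈ (univ.erase j).erase k, (1 + (μ l : ℝ))) := by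
  have hfun : (fun x : Fin m → ℕ => (∏ j, (x j : ℝ) - (∏ j, (μ j : ℝ)) * (1 + ∑ j, ((μ j : ℝ))⁻¹ * ((x j : ℝ) - (μ j : ℝ)))) ^ 2 * (∏ j, ((x j : ℝ) * ((x j : ℝ) - 1)) - ∏ j, (x j : ℝ) ^ 2))
      = fun x : Fin m → ℕ =>
      (∏ l, gA2 (x l) - ∏ l, gB2 (x l))
      - 2*(∏ j, (μ j : ℝ))*(∏ l, gA1 (x l) - ∏ l, gB1 (x l))
      - 2*(∏ j, (μ j : ℝ))*(∑ j, ((μ j : ℝ))⁻¹ * (((x j : ℝ) - (μ j : ℝ)) * ∏ l, gA1 (x l) - ((x j : ℝ) - (μ j : ℝ)) * ∏ l, gB1 (x l)))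
      + (∏ j, (μ j : ℝ))^2*(∏ l, gA0 (x l) - ∏ l, gB0 (x l))
      + 2*(∏ j, (μ j : ℝ))^2*(∑ j, ((μ j : ℝ))⁻¹ * (((x j : ℝ) - (μ j : ℝ)) * ∏ l, gA0 (x l) - ((x j : ℝ) - (μ j : ℝ)) * ∏ l, gB0 (x l)))
      + (∏ j, (μ j : ℝ))^2*(∑ j, (((μ j : ℝ))⁻¹ * ((μ j : ℝ))⁻¹) * (((x j : ℝ) - (μ j : ℝ)) * (((x j : ℝ) - (μ j : ℝ)) * ∏ l, gA0 (x l)) - ((x j : ℝ) - (μ j : ℝ)) * (((x j : ℝ) - (μ j : ℝ)) * ∏ l, gB0 (x l))))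
      + (∏ j, (μ j : ℝ))^2*(∑ j, ∑ k ∈ univ.erase j, (((μ j : ℝ))⁻¹ * ((μ k : ℝ))⁻¹) * (((x j : ℝ) - (μ j : ℝ)) * (((x k : ℝ) - (μ k : ℝ)) * ∏ l, gA0 (x l)) - ((x j : ℝ) - (μ j : ℝ)) * (((x k : ℝ) - (μ k : ℝ)) * ∏ l, gB0 (x l)))) := by
    funext x
    simp only [gA2, gB2, gA1, gB1, gA0, gB0]
    have e1 : ∏ l, ((x l:ℝ)^2*((x l:ℝ)*((x l:ℝ)-1)))
        = (∏ l, (x l:ℝ))^2 * ∏ l, ((x l:ℝ)*((x l:ℝ)-1)) := by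
      rw [Finset.prod_mul_distrib, Finset.prod_pow]
    have e2 : ∏ l, ((x l:ℝ)^2*(x l:ℝ)^2)
        = (∏ l, (x l:ℝ))^2 * (∏ l, (x l:ℝ))^2 := by
      rw [Finset.prod_mul_distrib, Finset.prod_pow]
    have e3 : ∏ l, ((x l:ℝ)*((x l:ℝ)*((x l:ℝ)-1)))
        = (∏ l, (x l:ℝ)) * ∏ l, ((x l:ℝ)*((x l:ℝ)-1)) := by
      rw [Finset.prod_mul_distrib]
    have e4 : ∏ l, ((x l:ℝ)*(x l:ℝ)^2)
        = (∏ l, (x l:ℝ)) * (∏ l, (x l:ℝ))^2 := by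
      rw [Finset.prod_mul_distrib, Finset.prod_pow]
    have e5 : ∏ l, (x l:ℝ)^2 = (∏ l, (x l:ℝ))^2 := Finset.prod_pow _ _ _
    rw [e1, e2, e3, e4, e5]
    set P := ∏ l, (x l:ℝ) with hP
    set A := ∏ l, ((x l:ℝ)*((x l:ℝ)-1)) with hA
    set S := ∑ j, ((μ j : ℝ))⁻¹ * ((x j : ℝ) - (μ j : ℝ)) with hS
    set p := ∏ j, (μ j : ℝ) with hp
    have hsum : ∀ C D : ℝ, (∑ j, ((μ j : ℝ))⁻¹ * (((x j : ℝ) - (μ j : ℝ)) * C - ((x j : ℝ) - (μ j : ℝ)) * D)) = S * C - S * D := by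
      intro C D
      rw [show (∑ j, ((μ j : ℝ))⁻¹ * (((x j : ℝ) - (μ j : ℝ)) * C - ((x j : ℝ) - (μ j : ℝ)) * D))
          = ∑ j, ((((μ j : ℝ))⁻¹ * ((x j : ℝ) - (μ j : ℝ))) * C - (((μ j : ℝ))⁻¹ * ((x j : ℝ) - (μ j : ℝ))) * D)
        from Finset.sum_congr rfl fun j _ => by ring]
      rw [Finset.sum_sub_distrib, ← Finset.sum_mul, ← Finset.sum_mul]
    have hQd : ∀ C : ℝ, (∑ j, (((μ j : ℝ))⁻¹ * ((μ j : ℝ))⁻¹) * (((x j : ℝ) - (μ j : ℝ)) * (((x j : ℝ) - (μ j : ℝ)) * C)))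
        = (∑ j, (((μ j : ℝ))⁻¹ * ((x j : ℝ) - (μ j : ℝ))) * (((μ j : ℝ))⁻¹ * ((x j : ℝ) - (μ j : ℝ)))) * C := by
      intro C
      rw [Finset.sum_mul]
      exact Finset.sum_congr rfl fun j _ => by ring
    have hOo : ∀ C : ℝ, (∑ j, ∑ k ∈ univ.erase j, (((μ j : ℝ))⁻¹ * ((μ k : ℝ))⁻¹) * (((x j : ℝ) - (μ j : ℝ)) * (((x k : ℝ) - (μ k : ℝ)) * C)))
        = (S * S - ∑ j, (((μ j : ℝ))⁻¹ * ((x j : ℝ) - (μ j : ℝ))) * (((μ j : ℝ))⁻¹ * ((x j : ℝ) - (μ j : ℝ)))) * C := by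
      intro C
      have hSS : S * S = ∑ j, ∑ k, (((μ j : ℝ))⁻¹ * ((x j : ℝ) - (μ j : ℝ))) * (((μ k : ℝ))⁻¹ * ((x k : ℝ) - (μ k : ℝ))) := by
        rw [hS, Finset.sum_mul_sum]
      have hsplit : ∀ j : Fin m, (∑ k, (((μ j : ℝ))⁻¹ * ((x j : ℝ) - (μ j : ℝ))) * (((μ k : ℝ))⁻¹ * ((x k : ℝ) - (μ k : ℝ))))
          = (((μ j : ℝ))⁻¹ * ((x j : ℝ) - (μ j : ℝ))) * (((μ j : ℝ))⁻¹ * ((x j : ℝ) - (μ j : ℝ)))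
            + ∑ k ∈ univ.erase j, (((μ j : ℝ))⁻¹ * ((x j : ℝ) - (μ j : ℝ))) * (((μ k : ℝ))⁻¹ * ((x k : ℝ) - (μ k : ℝ))) := by
        intro j
        exact (Finset.add_sum_erase _ _ (Finset.mem_univ j)).symm
      have key : (∑ j, ∑ k ∈ univ.erase j, (((μ j : ℝ))⁻¹ * ((x j : ℝ) - (μ j : ℝ))) * (((μ k : ℝ))⁻¹ * ((x k : ℝ) - (μ k : ℝ))))
          = S * S - ∑ j, (((μ j : ℝ))⁻¹ * ((x j : ℝ) - (μ j : ℝ))) * (((μ j : ℝ))⁻¹ * ((x j : ℝ) - (μ j : ℝ))) := by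
        rw [hSS, Finset.sum_congr rfl fun j _ => hsplit j, Finset.sum_add_distrib]
        ring
      have h1 : (∑ j, ∑ k ∈ univ.erase j, (((μ j : ℝ))⁻¹ * ((μ k : ℝ))⁻¹) * (((x j : ℝ) - (μ j : ℝ)) * (((x k : ℝ) - (μ k : ℝ)) * C)))
          = ∑ j, ∑ k ∈ univ.erase j, ((((μ j : ℝ))⁻¹ * ((x j : ℝ) - (μ j : ℝ))) * (((μ k : ℝ))⁻¹ * ((x k : ℝ) - (μ k : ℝ)))) * C :=
        Finset.sum_congr rfl fun j _ => Finset.sum_congr rfl fun k _ => by ring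
      rw [h1]
      simp only [← Finset.sum_mul]
      rw [key]
    have hsub1 : ∀ C D : ℝ, (∑ j, (((μ j : ℝ))⁻¹ * ((μ j : ℝ))⁻¹) * (((x j : ℝ) - (μ j : ℝ)) * (((x j : ℝ) - (μ j : ℝ)) * C) - ((x j : ℝ) - (μ j : ℝ)) * (((x j : ℝ) - (μ j : ℝ)) * D)))
        = (∑ j, (((μ j : ℝ))⁻¹ * ((μ j : ℝ))⁻¹) * (((x j : ℝ) - (μ j : ℝ)) * (((x j : ℝ) - (μ j : ℝ)) * C)))
          - (∑ j, (((μ j : ℝ))⁻¹ * ((μ j : ℝ))⁻¹) * (((x j : ℝ) - (μ j : ℝ)) * (((x j : ℝ) - (μ j : ℝ)) * D))) := by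
      intro C D
      rw [← Finset.sum_sub_distrib]
      exact Finset.sum_congr rfl fun j _ => by ring
    have hsub2 : ∀ C D : ℝ, (∑ j, ∑ k ∈ univ.erase j, (((μ j : ℝ))⁻¹ * ((μ k : ℝ))⁻¹) * (((x j : ℝ) - (μ j : ℝ)) * (((x k : ℝ) - (μ k : ℝ)) * C) - ((x j : ℝ) - (μ j : ℝ)) * (((x k : ℝ) - (μ k : ℝ)) * D)))
        = (∑ j, ∑ k ∈ univ.erase j, (((μ j : ℝ))⁻¹ * ((μ k : ℝ))⁻¹) * (((x j : ℝ) - (μ j : ℝ)) * (((x k : ℝ) - (μ k : ℝ)) * C)))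
          - (∑ j, ∑ k ∈ univ.erase j, (((μ j : ℝ))⁻¹ * ((μ k : ℝ))⁻¹) * (((x j : ℝ) - (μ j : ℝ)) * (((x k : ℝ) - (μ k : ℝ)) * D))) := by
      intro C D
      rw [← Finset.sum_sub_distrib]
      refine Finset.sum_congr rfl fun j _ => ?_
      rw [← Finset.sum_sub_distrib]
      exact Finset.sum_congr rfl fun k _ => by ring
    rw [hsum, hsum, hsub1, hsub2, hQd, hQd, hOo, hOo]
    ring
  rw [hfun]
  -- Stage 2: moments
  have mA2 : ∀ l, Integrable gA2 (poissonMeasure (μ l)) ∧ ∫ n : ℕ, gA2 n ∂(poissonMeasure (μ l))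
      = (μ l:ℝ)^2*(4+5*(μ l:ℝ)+(μ l:ℝ)^2) :=
    fun l => pmom (μ l) gA2 0 0 0 (-1) 1 _ (fun n => by simp only [gA2]; ring) (by ring)
  have mB2 : ∀ l, Integrable gB2 (poissonMeasure (μ l)) ∧ ∫ n : ℕ, gB2 n ∂(poissonMeasure (μ l))
      = (μ l:ℝ)*(1+7*(μ l:ℝ)+6*(μ l:ℝ)^2+(μ l:ℝ)^3) :=
    fun l => pmom (μ l) gB2 0 0 0 0 1 _ (fun n => by simp only [gB2]; ring) (by ring)
  have mA1 : ∀ l, Integrable gA1 (poissonMeasure (μ l)) ∧ ∫ n : ℕ, gA1 n ∂(poissonMeasure (μ l))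
      = (μ l:ℝ)^2*(2+(μ l:ℝ)) :=
    fun l => pmom (μ l) gA1 0 0 (-1) 1 0 _ (fun n => by simp only [gA1]; ring) (by ring)
  have mB1 : ∀ l, Integrable gB1 (poissonMeasure (μ l)) ∧ ∫ n : ℕ, gB1 n ∂(poissonMeasure (μ l))
      = (μ l:ℝ)*(1+3*(μ l:ℝ)+(μ l:ℝ)^2) :=
    fun l => pmom (μ l) gB1 0 0 0 1 0 _ (fun n => by simp only [gB1]; ring) (by ring)
  have mA0 : ∀ l, Integrable gA0 (poissonMeasure (μ l)) ∧ ∫ n : ℕ, gA0 n ∂(poissonMeasure (μ l))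
      = (μ l:ℝ)^2 :=
    fun l => pmom (μ l) gA0 0 (-1) 1 0 0 _ (fun n => by simp only [gA0]; ring) (by ring)
  have mB0 : ∀ l, Integrable gB0 (poissonMeasure (μ l)) ∧ ∫ n : ℕ, gB0 n ∂(poissonMeasure (μ l))
      = (μ l:ℝ)*(1+(μ l:ℝ)) :=
    fun l => pmom (μ l) gB0 0 0 1 0 0 _ (fun n => by simp only [gB0]; ring) (by ring)
  have msA1 : ∀ j, Integrable (sp (μ j:ℝ) gA1) (poissonMeasure (μ j)) ∧
      ∫ n : ℕ, sp (μ j:ℝ) gA1 n ∂(poissonMeasure (μ j)) = (μ j:ℝ)^2*(4+3*(μ j:ℝ)) :=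
    fun j => pmom (μ j) _ 0 0 (μ j:ℝ) (-(1+(μ j:ℝ))) 1 _
      (fun n => by simp only [sp, gA1]; ring) (by ring)
  have msB1 : ∀ j, Integrable (sp (μ j:ℝ) gB1) (poissonMeasure (μ j)) ∧
      ∫ n : ℕ, sp (μ j:ℝ) gB1 n ∂(poissonMeasure (μ j)) = (μ j:ℝ)*(1+6*(μ j:ℝ)+3*(μ j:ℝ)^2) :=
    fun j => pmom (μ j) _ 0 0 0 (-(μ j:ℝ)) 1 _
      (fun n => by simp only [sp, gB1]; ring) (by ring)
  have msA0 : ∀ j, Integrable (sp (μ j:ℝ) gA0) (poissonMeasure (μ j)) ∧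
      ∫ n : ℕ, sp (μ j:ℝ) gA0 n ∂(poissonMeasure (μ j)) = 2*(μ j:ℝ)^2 :=
    fun j => pmom (μ j) _ 0 (μ j:ℝ) (-(1+(μ j:ℝ))) 1 0 _
      (fun n => by simp only [sp, gA0]; ring) (by ring)
  have msB0 : ∀ j, Integrable (sp (μ j:ℝ) gB0) (poissonMeasure (μ j)) ∧
      ∫ n : ℕ, sp (μ j:ℝ) gB0 n ∂(poissonMeasure (μ j)) = (μ j:ℝ)*(1+2*(μ j:ℝ)) :=
    fun j => pmom (μ j) _ 0 0 (-(μ j:ℝ)) 1 0 _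
      (fun n => by simp only [sp, gB0]; ring) (by ring)
  have mdA0 : ∀ j, Integrable (sp2 (μ j:ℝ) gA0) (poissonMeasure (μ j)) ∧
      ∫ n : ℕ, sp2 (μ j:ℝ) gA0 n ∂(poissonMeasure (μ j)) = (μ j:ℝ)^2*(4+(μ j:ℝ)) :=
    fun j => pmom (μ j) _ 0 (-(μ j:ℝ)^2) (2*(μ j:ℝ)+(μ j:ℝ)^2) (-(1+2*(μ j:ℝ))) 1 _
      (fun n => by simp only [sp2, gA0]; ring) (by ring)
  have mdB0 : ∀ j, Integrable (sp2 (μ j:ℝ) gB0) (poissonMeasure (μ j)) ∧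
      ∫ n : ℕ, sp2 (μ j:ℝ) gB0 n ∂(poissonMeasure (μ j)) = (μ j:ℝ)*(1+5*(μ j:ℝ)+(μ j:ℝ)^2) :=
    fun j => pmom (μ j) _ 0 0 ((μ j:ℝ)^2) (-(2*(μ j:ℝ))) 1 _
      (fun n => by simp only [sp2, gB0]; ring) (by ring)
  -- product-level
  have PA2 := plain_term μ gA2 _ mA2
  have PB2 := plain_term μ gB2 _ mB2
  have PA1 := plain_term μ gA1 _ mA1
  have PB1 := plain_term μ gB1 _ mB1
  have PA0 := plain_term μ gA0 _ mA0
  have PB0 := plain_term μ gB0 _ mB0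
  have SA1 := fun j : Fin m => single_term μ gA1 (sp (μ j:ℝ) gA1) _ _ j (fun n => rfl) mA1 (msA1 j)
  have SB1 := fun j : Fin m => single_term μ gB1 (sp (μ j:ℝ) gB1) _ _ j (fun n => rfl) mB1 (msB1 j)
  have SA0 := fun j : Fin m => single_term μ gA0 (sp (μ j:ℝ) gA0) _ _ j (fun n => rfl) mA0 (msA0 j)
  have SB0 := fun j : Fin m => single_term μ gB0 (sp (μ j:ℝ) gB0) _ _ j (fun n => rfl) mB0 (msB0 j)
  have DA0 := fun j : Fin m => diag_term μ gA0 (sp2 (μ j:ℝ) gA0) _ _ j (fun n => rfl) mA0 (mdA0 j)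
  have DB0 := fun j : Fin m => diag_term μ gB0 (sp2 (μ j:ℝ) gB0) _ _ j (fun n => rfl) mB0 (mdB0 j)
  have OA0 := fun (j : Fin m) (k : Fin m) (hk : k ∈ univ.erase j) =>
    pair_term μ gA0 (sp (μ j:ℝ) gA0) (sp (μ k:ℝ) gA0) _ _ _ j k (Finset.ne_of_mem_erase hk)
      (fun n => rfl) (fun n => rfl) mA0 (msA0 j) (msA0 k)
  have OB0 := fun (j : Fin m) (k : Fin m) (hk : k ∈ univ.erase j) =>
    pair_term μ gB0 (sp (μ j:ℝ) gB0) (sp (μ k:ℝ) gB0) _ _ _ j k (Finset.ne_of_mem_erase hk)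
      (fun n => rfl) (fun n => rfl) mB0 (msB0 j) (msB0 k)
  -- integrability of chunks
  have I1 : Integrable (fun x : Fin m → ℕ => ∏ l, gA2 (x l) - ∏ l, gB2 (x l)) (poissonPi μ) :=
    PA2.1.sub PB2.1
  have I2 : Integrable (fun x : Fin m → ℕ =>
      2*(∏ j, (μ j : ℝ))*(∏ l, gA1 (x l) - ∏ l, gB1 (x l))) (poissonPi μ) :=
    (PA1.1.sub PB1.1).const_mul _
  have I3j : ∀ j : Fin m, Integrable (fun x : Fin m → ℕ =>
      ((μ j : ℝ))⁻¹ * (((x j : ℝ) - (μ j : ℝ)) * ∏ l, gA1 (x l) - ((x j : ℝ) - (μ j : ℝ)) * ∏ l, gB1 (x l)))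
      (poissonPi μ) := fun j => ((SA1 j).1.sub (SB1 j).1).const_mul _
  have I3 : Integrable (fun x : Fin m → ℕ =>
      2*(∏ j, (μ j : ℝ))*(∑ j, ((μ j : ℝ))⁻¹ * (((x j : ℝ) - (μ j : ℝ)) * ∏ l, gA1 (x l) - ((x j : ℝ) - (μ j : ℝ)) * ∏ l, gB1 (x l))))
      (poissonPi μ) := (integrable_finset_sum univ fun j _ => I3j j).const_mul _
  have I4 : Integrable (fun x : Fin m → ℕ =>
      (∏ j, (μ j : ℝ))^2*(∏ l, gA0 (x l) - ∏ l, gB0 (x l))) (poissonPi μ) :=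
    (PA0.1.sub PB0.1).const_mul _
  have I5j : ∀ j : Fin m, Integrable (fun x : Fin m → ℕ =>
      ((μ j : ℝ))⁻¹ * (((x j : ℝ) - (μ j : ℝ)) * ∏ l, gA0 (x l) - ((x j : ℝ) - (μ j : ℝ)) * ∏ l, gB0 (x l)))
      (poissonPi μ) := fun j => ((SA0 j).1.sub (SB0 j).1).const_mul _
  have I5 : Integrable (fun x : Fin m → ℕ =>
      2*(∏ j, (μ j : ℝ))^2*(∑ j, ((μ j : ℝ))⁻¹ * (((x j : ℝ) - (μ j : ℝ)) * ∏ l, gA0 (x l) - ((x j : ℝ) - (μ j : ℝ)) * ∏ l, gB0 (x l))))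
      (poissonPi μ) := (integrable_finset_sum univ fun j _ => I5j j).const_mul _
  have I6j : ∀ j : Fin m, Integrable (fun x : Fin m → ℕ =>
      (((μ j : ℝ))⁻¹ * ((μ j : ℝ))⁻¹) * (((x j : ℝ) - (μ j : ℝ)) * (((x j : ℝ) - (μ j : ℝ)) * ∏ l, gA0 (x l)) - ((x j : ℝ) - (μ j : ℝ)) * (((x j : ℝ) - (μ j : ℝ)) * ∏ l, gB0 (x l))))
      (poissonPi μ) := fun j => ((DA0 j).1.sub (DB0 j).1).const_mul _
  have I6 : Integrable (fun x : Fin m → ℕ =>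
      (∏ j, (μ j : ℝ))^2*(∑ j, (((μ j : ℝ))⁻¹ * ((μ j : ℝ))⁻¹) * (((x j : ℝ) - (μ j : ℝ)) * (((x j : ℝ) - (μ j : ℝ)) * ∏ l, gA0 (x l)) - ((x j : ℝ) - (μ j : ℝ)) * (((x j : ℝ) - (μ j : ℝ)) * ∏ l, gB0 (x l)))))
      (poissonPi μ) := (integrable_finset_sum univ fun j _ => I6j j).const_mul _
  have I7jk : ∀ (j k : Fin m), k ∈ univ.erase j → Integrable (fun x : Fin m → ℕ =>
      (((μ j : ℝ))⁻¹ * ((μ k : ℝ))⁻¹) * (((x j : ℝ) - (μ j : ℝ)) * (((x k : ℝ) - (μ k : ℝ)) * ∏ l, gA0 (x l)) - ((x j : ℝ) - (μ j : ℝ)) * (((x k : ℝ) - (μ k : ℝ)) * ∏ l, gB0 (x l))))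
      (poissonPi μ) := fun j k hk => ((OA0 j k hk).1.sub (OB0 j k hk).1).const_mul _
  have I7 : Integrable (fun x : Fin m → ℕ =>
      (∏ j, (μ j : ℝ))^2*(∑ j, ∑ k ∈ univ.erase j, (((μ j : ℝ))⁻¹ * ((μ k : ℝ))⁻¹) * (((x j : ℝ) - (μ j : ℝ)) * (((x k : ℝ) - (μ k : ℝ)) * ∏ l, gA0 (x l)) - ((x j : ℝ) - (μ j : ℝ)) * (((x k : ℝ) - (μ k : ℝ)) * ∏ l, gB0 (x l)))))
      (poissonPi μ) :=
    (integrable_finset_sum univ fun j _ => integrable_finset_sum _ fun k hk => I7jk j k hk).const_mul _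
  -- chunk integrals
  have E3 : ∫ x : Fin m → ℕ, (∑ j, ((μ j : ℝ))⁻¹ * (((x j : ℝ) - (μ j : ℝ)) * ∏ l, gA1 (x l) - ((x j : ℝ) - (μ j : ℝ)) * ∏ l, gB1 (x l))) ∂(poissonPi μ)
      = ∑ j, ((μ j : ℝ))⁻¹ * ((μ j:ℝ)^2*(4+3*(μ j:ℝ)) * ∏ l ∈ univ.erase j, (μ l:ℝ)^2*(2+(μ l:ℝ))
        - (μ j:ℝ)*(1+6*(μ j:ℝ)+3*(μ j:ℝ)^2) * ∏ l ∈ univ.erase j, (μ l:ℝ)*(1+3*(μ l:ℝ)+(μ l:ℝ)^2)) := by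
    rw [integral_finset_sum univ fun j _ => I3j j]
    refine Finset.sum_congr rfl fun j _ => ?_
    rw [integral_const_mul, integral_sub (SA1 j).1 (SB1 j).1, (SA1 j).2, (SB1 j).2]
  have E5 : ∫ x : Fin m → ℕ, (∑ j, ((μ j : ℝ))⁻¹ * (((x j : ℝ) - (μ j : ℝ)) * ∏ l, gA0 (x l) - ((x j : ℝ) - (μ j : ℝ)) * ∏ l, gB0 (x l))) ∂(poissonPi μ)
      = ∑ j, ((μ j : ℝ))⁻¹ * (2*(μ j:ℝ)^2 * ∏ l ∈ univ.erase j, (μ l:ℝ)^2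
        - (μ j:ℝ)*(1+2*(μ j:ℝ)) * ∏ l ∈ univ.erase j, (μ l:ℝ)*(1+(μ l:ℝ))) := by
    rw [integral_finset_sum univ fun j _ => I5j j]
    refine Finset.sum_congr rfl fun j _ => ?_
    rw [integral_const_mul, integral_sub (SA0 j).1 (SB0 j).1, (SA0 j).2, (SB0 j).2]
  have E6 : ∫ x : Fin m → ℕ, (∑ j, (((μ j : ℝ))⁻¹ * ((μ j : ℝ))⁻¹) * (((x j : ℝ) - (μ j : ℝ)) * (((x j : ℝ) - (μ j : ℝ)) * ∏ l, gA0 (x l)) - ((x j : ℝ) - (μ j : ℝ)) * (((x j : ℝ) - (μ j : ℝ)) * ∏ l, gB0 (x l)))) ∂(poissonPi μ)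
      = ∑ j, (((μ j : ℝ))⁻¹ * ((μ j : ℝ))⁻¹) * ((μ j:ℝ)^2*(4+(μ j:ℝ)) * ∏ l ∈ univ.erase j, (μ l:ℝ)^2
        - (μ j:ℝ)*(1+5*(μ j:ℝ)+(μ j:ℝ)^2) * ∏ l ∈ univ.erase j, (μ l:ℝ)*(1+(μ l:ℝ))) := by
    rw [integral_finset_sum univ fun j _ => I6j j]
    refine Finset.sum_congr rfl fun j _ => ?_
    rw [integral_const_mul, integral_sub (DA0 j).1 (DB0 j).1, (DA0 j).2, (DB0 j).2]
  have E7 : ∫ x : Fin m → ℕ, (∑ j, ∑ k ∈ univ.erase j, (((μ j : ℝ))⁻¹ * ((μ k : ℝ))⁻¹) * (((x j : ℝ) - (μ j : ℝ)) * (((x k : ℝ) - (μ k : ℝ)) * ∏ l, gA0 (x l)) - ((x j : ℝ) - (μ j : ℝ)) * (((x k : ℝ) - (μ k : ℝ)) * ∏ l, gB0 (x l)))) ∂(poissonPi μ)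
      = ∑ j, ∑ k ∈ univ.erase j, (((μ j : ℝ))⁻¹ * ((μ k : ℝ))⁻¹) * (2*(μ j:ℝ)^2 * (2*(μ k:ℝ)^2 * ∏ l ∈ (univ.erase j).erase k, (μ l:ℝ)^2)
        - (μ j:ℝ)*(1+2*(μ j:ℝ)) * ((μ k:ℝ)*(1+2*(μ k:ℝ)) * ∏ l ∈ (univ.erase j).erase k, (μ l:ℝ)*(1+(μ l:ℝ)))) := by
    rw [integral_finset_sum univ fun j _ => integrable_finset_sum _ fun k hk => I7jk j k hk]
    refine Finset.sum_congr rfl fun j _ => ?_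
    rw [integral_finset_sum _ fun k hk => I7jk j k hk]
    refine Finset.sum_congr rfl fun k hk => ?_
    rw [integral_const_mul, integral_sub (OA0 j k hk).1 (OB0 j k hk).1, (OA0 j k hk).2, (OB0 j k hk).2]
  have J2 : Integrable (fun x : Fin m → ℕ => (∏ l, gA2 (x l) - ∏ l, gB2 (x l)) - (2*(∏ j, (μ j : ℝ))*(∏ l, gA1 (x l) - ∏ l, gB1 (x l)))) (poissonPi μ) := I1.sub I2
  have J3 : Integrable (fun x : Fin m → ℕ => (∏ l, gA2 (x l) - ∏ l, gB2 (x l)) - (2*(∏ j, (μ j : ℝ))*(∏ l, gA1 (x l) - ∏ l, gB1 (x l))) - (2*(∏ j, (μ j : ℝ))*(∑ j, ((μ j : ℝ))⁻¹ * (((x j : ℝ) - (μ j : ℝ)) * ∏ l, gA1 (x l) - ((x j : ℝ) - (μ j : ℝ)) * ∏ l, gB1 (x l))))) (poissonPi μ) := J2.sub I3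
  have J4 : Integrable (fun x : Fin m → ℕ => (∏ l, gA2 (x l) - ∏ l, gB2 (x l)) - (2*(∏ j, (μ j : ℝ))*(∏ l, gA1 (x l) - ∏ l, gB1 (x l))) - (2*(∏ j, (μ j : ℝ))*(∑ j, ((μ j : ℝ))⁻¹ * (((x j : ℝ) - (μ j : ℝ)) * ∏ l, gA1 (x l) - ((x j : ℝ) - (μ j : ℝ)) * ∏ l, gB1 (x l)))) + ((∏ j, (μ j : ℝ))^2*(∏ l, gA0 (x l) - ∏ l, gB0 (x l)))) (poissonPi μ) := J3.add I4
  have J5 : Integrable (fun x : Fin m → ℕ => (∏ l, gA2 (x l) - ∏ l, gB2 (x l)) - (2*(∏ j, (μ j : ℝ))*(∏ l, gA1 (x l) - ∏ l, gB1 (x l))) - (2*(∏ j, (μ j : ℝ))*(∑ j, ((μ j : ℝ))⁻¹ * (((x j : ℝ) - (μ j : ℝ)) * ∏ l, gA1 (x l) - ((x j : ℝ) - (μ j : ℝ)) * ∏ l, gB1 (x l)))) + ((∏ j, (μ j : ℝ))^2*(∏ l, gA0 (x l) - ∏ l, gB0 (x l))) + (2*(∏ j, (μ j : ℝ))^2*(∑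 j, ((μ j : ℝ))⁻¹ * (((x j : ℝ) - (μ j : ℝ)) * ∏ l, gA0 (x l) - ((x j : ℝ) - (μ j : ℝ)) * ∏ l, gB0 (x l))))) (poissonPi μ) := J4.add I5
  have J6 : Integrable (fun x : Fin m → ℕ => (∏ l, gA2 (x l) - ∏ l, gB2 (x l)) - (2*(∏ j, (μ j : ℝ))*(∏ l, gA1 (x l) - ∏ l, gB1 (x l))) - (2*(∏ j, (μ j : ℝ))*(∑ j, ((μ j : ℝ))⁻¹ * (((x j : ℝ) - (μ j : ℝ)) * ∏ l, gA1 (x l) - ((x j : ℝ) - (μ j : ℝ)) * ∏ l, gB1 (x l)))) + ((∏ j, (μ j : ℝ))^2*(∏ l, gA0 (x l) - ∏ l, gB0 (x l))) + (2*(∏ j, (μ j : ℝ))^2*(∑ j, ((μ j : ℝ))⁻¹ * (((x j : ℝ) - (μ j : ℝ)) * ∏ l, gA0 (x l) - ((x j : ℝ) - (μ j : ℝ)) * ∏ l, gB0 (x l)))) + ((∏ j, (μ j : ℝ))^2*(∑ j, (((μ j : ℝ))⁻¹ * ((μ j : ℝ))⁻¹) * (((x j : ℝ) - (μ j : ℝ))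 * (((x j : ℝ) - (μ j : ℝ)) * ∏ l, gA0 (x l)) - ((x j : ℝ) - (μ j : ℝ)) * (((x j : ℝ) - (μ j : ℝ)) * ∏ l, gB0 (x l)))))) (poissonPi μ) := J5.add I6
  rw [integral_add J6 I7,
    integral_add J5 I6,
    integral_add J4 I5,
    integral_add J3 I4,
    integral_sub J2 I3,
    integral_sub I1 I2,
    integral_sub PA2.1 PB2.1, PA2.2, PB2.2,
    integral_const_mul, integral_sub PA1.1 PB1.1, PA1.2, PB1.2,
    integral_const_mul, E3,
    integral_const_mul, integral_sub PA0.1 PB0.1, PA0.2, PB0.2,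
    integral_const_mul, E5,
    integral_const_mul, E6,
    integral_const_mul, E7]
  -- Stage 3: final algebra
  have hne : ∀ j : Fin m, (μ j:ℝ) ≠ 0 := fun j => ne_of_gt (by exact_mod_cast hμ j)
  have hAe : ∀ j : Fin m, (μ j:ℝ) * ∏ l ∈ univ.erase j, (μ l:ℝ) = ∏ l, (μ l:ℝ) :=
    fun j => Finset.mul_prod_erase univ (fun l => (μ l:ℝ)) (Finset.mem_univ j)
  have hAee : ∀ (j k : Fin m), k ∈ univ.erase j →
      (μ k:ℝ) * ∏ l ∈ (univ.erase j).erase k, (μ l:ℝ) = ∏ l ∈ univ.erase j, (μ l:ℝ) :=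
    fun j k hk => Finset.mul_prod_erase _ (fun l => (μ l:ℝ)) hk
  have K1 : (∏ l, (μ l:ℝ)^2*(4+5*(μ l:ℝ)+(μ l:ℝ)^2)) - (∏ l, (μ l:ℝ)*(1+7*(μ l:ℝ)+6*(μ l:ℝ)^2+(μ l:ℝ)^3))
      = (∏ j, (μ j:ℝ)) * ((∏ j, (μ j:ℝ)) * ∏ j, (4+5*(μ j:ℝ)+(μ j:ℝ)^2) - ∏ j, (1+7*(μ j:ℝ)+6*(μ j:ℝ)^2+(μ j:ℝ)^3)) := by
    rw [Finset.prod_mul_distrib, Finset.prod_mul_distrib, Finset.prod_pow]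
    ring
  have K2 : (2*(∏ j, (μ j:ℝ)))*((∏ l, (μ l:ℝ)^2*(2+(μ l:ℝ))) - (∏ l, (μ l:ℝ)*(1+3*(μ l:ℝ)+(μ l:ℝ)^2)))
      = 2*(∏ j, (μ j:ℝ))^2 * ((∏ j, (μ j:ℝ)) * ∏ j, (2+(μ j:ℝ)) - ∏ j, (1+3*(μ j:ℝ)+(μ j:ℝ)^2)) := by
    rw [Finset.prod_mul_distrib, Finset.prod_mul_distrib, Finset.prod_pow]
    ring
  have K4 : (∏ j, (μ j:ℝ))^2*((∏ l, (μ l:ℝ)^2) - (∏ l, (μ l:ℝ)*(1+(μ l:ℝ))))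
      = (∏ j, (μ j:ℝ))^3 * ((∏ j, (μ j:ℝ)) - ∏ j, (1+(μ j:ℝ))) := by
    rw [Finset.prod_pow, Finset.prod_mul_distrib]
    ring
  have K3 : (2*(∏ j, (μ j:ℝ)))*(∑ j, ((μ j:ℝ))⁻¹ * ((μ j:ℝ)^2*(4+3*(μ j:ℝ)) * ∏ l ∈ univ.erase j, (μ l:ℝ)^2*(2+(μ l:ℝ))
        - (μ j:ℝ)*(1+6*(μ j:ℝ)+3*(μ j:ℝ)^2) * ∏ l ∈ univ.erase j, (μ l:ℝ)*(1+3*(μ l:ℝ)+(μ l:ℝ)^2)))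
      = 2*(∏ j, (μ j:ℝ))^2 * ((∏ j, (μ j:ℝ)) * ∑ j, ((μ j:ℝ))⁻¹ * (4+3*(μ j:ℝ)) * ∏ k ∈ univ.erase j, (2+(μ k:ℝ))
        - ∑ j, ((μ j:ℝ))⁻¹ * (1+6*(μ j:ℝ)+3*(μ j:ℝ)^2) * ∏ k ∈ univ.erase j, (1+3*(μ k:ℝ)+(μ k:ℝ)^2)) := by
    rw [Finset.mul_sum]
    rw [Finset.sum_congr rfl (fun j _ => show
        (2*(∏ j, (μ j:ℝ)))*(((μ j:ℝ))⁻¹ * ((μ j:ℝ)^2*(4+3*(μ j:ℝ)) * ∏ l ∈ univ.erase j, (μ l:ℝ)^2*(2+(μ l:ℝ))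
          - (μ j:ℝ)*(1+6*(μ j:ℝ)+3*(μ j:ℝ)^2) * ∏ l ∈ univ.erase j, (μ l:ℝ)*(1+3*(μ l:ℝ)+(μ l:ℝ)^2)))
        = 2*(∏ j, (μ j:ℝ))^2 * ((∏ j, (μ j:ℝ)) * (((μ j:ℝ))⁻¹ * (4+3*(μ j:ℝ)) * ∏ k ∈ univ.erase j, (2+(μ k:ℝ))))
          - 2*(∏ j, (μ j:ℝ))^2 * (((μ j:ℝ))⁻¹ * (1+6*(μ j:ℝ)+3*(μ j:ℝ)^2) * ∏ k ∈ univ.erase j, (1+3*(μ k:ℝ)+(μ k:ℝ)^2)) from by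
      rw [Finset.prod_mul_distrib, Finset.prod_mul_distrib, Finset.prod_pow, ← hAe j]
      ring)]
    rw [Finset.sum_sub_distrib, ← Finset.mul_sum, ← Finset.mul_sum, ← Finset.mul_sum]
    ring
  have K5 : 2*(∏ j, (μ j:ℝ))^2*(∑ j, ((μ j:ℝ))⁻¹ * (2*(μ j:ℝ)^2 * ∏ l ∈ univ.erase j, (μ l:ℝ)^2
        - (μ j:ℝ)*(1+2*(μ j:ℝ)) * ∏ l ∈ univ.erase j, (μ l:ℝ)*(1+(μ l:ℝ))))
      = 2*(∏ j, (μ j:ℝ))^3 * (2*(∏ j, (μ j:ℝ)) * (∑ j, ((μ j:ℝ))⁻¹)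
        - ∑ j, ((μ j:ℝ))⁻¹ * (1+2*(μ j:ℝ)) * ∏ k ∈ univ.erase j, (1+(μ k:ℝ))) := by
    rw [Finset.mul_sum]
    rw [Finset.sum_congr rfl (fun j _ => show
        2*(∏ j, (μ j:ℝ))^2*(((μ j:ℝ))⁻¹ * (2*(μ j:ℝ)^2 * ∏ l ∈ univ.erase j, (μ l:ℝ)^2
          - (μ j:ℝ)*(1+2*(μ j:ℝ)) * ∏ l ∈ univ.erase j, (μ l:ℝ)*(1+(μ l:ℝ))))
        = 4*(∏ j, (μ j:ℝ))^3*((∏ j, (μ j:ℝ)) * ((μ j:ℝ))⁻¹)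
          - 2*(∏ j, (μ j:ℝ))^3 * (((μ j:ℝ))⁻¹ * (1+2*(μ j:ℝ)) * ∏ k ∈ univ.erase j, (1+(μ k:ℝ))) from by
      rw [Finset.prod_pow, Finset.prod_mul_distrib, ← hAe j]
      ring)]
    rw [Finset.sum_sub_distrib, ← Finset.mul_sum, ← Finset.mul_sum, ← Finset.mul_sum]
    ring
  have hsq : (∑ j, ((μ j:ℝ))⁻¹) * (∑ j, ((μ j:ℝ))⁻¹)
      = (∑ j, ((μ j:ℝ))⁻¹ * ((μ j:ℝ))⁻¹) + ∑ j, ∑ k ∈ univ.erase j, ((μ j:ℝ))⁻¹ * ((μ k:ℝ))⁻¹ := by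
    rw [Finset.sum_mul_sum, ← Finset.sum_add_distrib]
    exact Finset.sum_congr rfl fun j _ => (Finset.add_sum_erase _ _ (Finset.mem_univ j)).symm
  have K67 : (∏ j, (μ j:ℝ))^2*(∑ j, (((μ j:ℝ))⁻¹ * ((μ j:ℝ))⁻¹) * ((μ j:ℝ)^2*(4+(μ j:ℝ)) * ∏ l ∈ univ.erase j, (μ l:ℝ)^2
        - (μ j:ℝ)*(1+5*(μ j:ℝ)+(μ j:ℝ)^2) * ∏ l ∈ univ.erase j, (μ l:ℝ)*(1+(μ l:ℝ))))
      + (∏ j, (μ j:ℝ))^2*(∑ j, ∑ k ∈ univ.erase j, (((μ j:ℝ))⁻¹ * ((μ k:ℝ))⁻¹) * (2*(μ j:ℝ)^2 * (2*(μ k:ℝ)^2 * ∏ l ∈ (univ.erase j).erase k, (μ l:ℝ)^2)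
        - (μ j:ℝ)*(1+2*(μ j:ℝ)) * ((μ k:ℝ)*(1+2*(μ k:ℝ)) * ∏ l ∈ (univ.erase j).erase k, (μ l:ℝ)*(1+(μ l:ℝ)))))
      = (∏ j, (μ j:ℝ))^3 * ((∏ j, (μ j:ℝ)) * (∑ j, ((μ j:ℝ))⁻¹) * (4 * (∑ j, ((μ j:ℝ))⁻¹) + 1)
        - ∑ j, ((μ j:ℝ))⁻¹ ^ 2 * (1+5*(μ j:ℝ)+(μ j:ℝ)^2) * ∏ k ∈ univ.erase j, (1+(μ k:ℝ))
        - ∑ j, ∑ k ∈ univ.erase j, ((μ j:ℝ))⁻¹ * ((μ k:ℝ))⁻¹ * (1+2*(μ j:ℝ)) * (1+2*(μ k:ℝ)) * ∏ l ∈ (univ.erase j).erase k, (1+(μ l:ℝ))) := by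
    have L6 : (∏ j, (μ j:ℝ))^2*(∑ j, (((μ j:ℝ))⁻¹ * ((μ j:ℝ))⁻¹) * ((μ j:ℝ)^2*(4+(μ j:ℝ)) * ∏ l ∈ univ.erase j, (μ l:ℝ)^2
          - (μ j:ℝ)*(1+5*(μ j:ℝ)+(μ j:ℝ)^2) * ∏ l ∈ univ.erase j, (μ l:ℝ)*(1+(μ l:ℝ))))
        = (4*(∏ j, (μ j:ℝ))^4*(∑ j, ((μ j:ℝ))⁻¹ * ((μ j:ℝ))⁻¹) + (∏ j, (μ j:ℝ))^4*(∑ j, ((μ j:ℝ))⁻¹))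
          - (∏ j, (μ j:ℝ))^3*(∑ j, ((μ j:ℝ))⁻¹ ^ 2 * (1+5*(μ j:ℝ)+(μ j:ℝ)^2) * ∏ k ∈ univ.erase j, (1+(μ k:ℝ))) := by
      rw [Finset.mul_sum]
      rw [Finset.sum_congr rfl (fun j _ => show
          (∏ j, (μ j:ℝ))^2*((((μ j:ℝ))⁻¹ * ((μ j:ℝ))⁻¹) * ((μ j:ℝ)^2*(4+(μ j:ℝ)) * ∏ l ∈ univ.erase j, (μ l:ℝ)^2
            - (μ j:ℝ)*(1+5*(μ j:ℝ)+(μ j:ℝ)^2) * ∏ l ∈ univ.erase j, (μ l:ℝ)*(1+(μ l:ℝ))))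
          = (4*(∏ j, (μ j:ℝ))^4*(((μ j:ℝ))⁻¹ * ((μ j:ℝ))⁻¹) + (∏ j, (μ j:ℝ))^4*((μ j:ℝ))⁻¹)
            - (∏ j, (μ j:ℝ))^3*(((μ j:ℝ))⁻¹ ^ 2 * (1+5*(μ j:ℝ)+(μ j:ℝ)^2) * ∏ k ∈ univ.erase j, (1+(μ k:ℝ))) from by
        rw [Finset.prod_pow, Finset.prod_mul_distrib, ← hAe j]
        linear_combination (((μ j:ℝ))⁻¹ * (μ j:ℝ)^4 * (∏ l ∈ univ.erase j, (μ l:ℝ))^4) * (inv_mul_cancel₀ (hne j)))]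
      rw [Finset.sum_sub_distrib, Finset.sum_add_distrib, ← Finset.mul_sum, ← Finset.mul_sum, ← Finset.mul_sum]
    have L7 : (∏ j, (μ j:ℝ))^2*(∑ j, ∑ k ∈ univ.erase j, (((μ j:ℝ))⁻¹ * ((μ k:ℝ))⁻¹) * (2*(μ j:ℝ)^2 * (2*(μ k:ℝ)^2 * ∏ l ∈ (univ.erase j).erase k, (μ l:ℝ)^2)
          - (μ j:ℝ)*(1+2*(μ j:ℝ)) * ((μ k:ℝ)*(1+2*(μ k:ℝ)) * ∏ l ∈ (univ.erase j).erase k, (μ l:ℝ)*(1+(μ l:ℝ)))))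
        = 4*(∏ j, (μ j:ℝ))^4*(∑ j, ∑ k ∈ univ.erase j, ((μ j:ℝ))⁻¹ * ((μ k:ℝ))⁻¹)
          - (∏ j, (μ j:ℝ))^3*(∑ j, ∑ k ∈ univ.erase j, ((μ j:ℝ))⁻¹ * ((μ k:ℝ))⁻¹ * (1+2*(μ j:ℝ)) * (1+2*(μ k:ℝ)) * ∏ l ∈ (univ.erase j).erase k, (1+(μ l:ℝ))) := by
      rw [mul_sum_sum]
      rw [Finset.sum_congr rfl (fun j _ => Finset.sum_congr rfl (fun k hk => show
          (∏ j, (μ j:ℝ))^2*((((μ j:ℝ))⁻¹ * ((μ k:ℝ))⁻¹) * (2*(μ j:ℝ)^2 * (2*(μ k:ℝ)^2 * ∏ l ∈ (univ.erase j).erase k, (μ l:ℝ)^2)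
            - (μ j:ℝ)*(1+2*(μ j:ℝ)) * ((μ k:ℝ)*(1+2*(μ k:ℝ)) * ∏ l ∈ (univ.erase j).erase k, (μ l:ℝ)*(1+(μ l:ℝ)))))
          = 4*(∏ j, (μ j:ℝ))^4*(((μ j:ℝ))⁻¹ * ((μ k:ℝ))⁻¹)
            - (∏ j, (μ j:ℝ))^3*(((μ j:ℝ))⁻¹ * ((μ k:ℝ))⁻¹ * (1+2*(μ j:ℝ)) * (1+2*(μ k:ℝ)) * ∏ l ∈ (univ.erase j).erase k, (1+(μ l:ℝ))) from by
        rw [Finset.prod_pow, Finset.prod_mul_distrib, ← hAe j, ← hAee j k hk]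
        ring))]
      rw [Finset.sum_congr rfl (fun j _ => Finset.sum_sub_distrib _ _), Finset.sum_sub_distrib,
        mul_sum_sum, mul_sum_sum]
    rw [L6, L7]
    have h2 : ∑ j, ∑ k ∈ univ.erase j, ((μ j:ℝ))⁻¹ * ((μ k:ℝ))⁻¹
        = (∑ j, ((μ j:ℝ))⁻¹) * (∑ j, ((μ j:ℝ))⁻¹) - (∑ j, ((μ j:ℝ))⁻¹ * ((μ j:ℝ))⁻¹) := by
      rw [hsq]; ring
    rw [h2]
    ring
  linear_combination K1 - K2 - K3 + K4 + K5 + K67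
end

section
/- Let V = p_1 ∑_{j=1}^m μ_j^{-1}Ẋ_j and X = ∏_{j=1}^m X_j(X_j−1) − ∏_{j=1}^m X_j². Then E[V X] = p_1²( 2p_1 s_1 − ∑_{j=1}^m μ_j^{-1}(1+2μ_j)∏_{k≠j}(1+μ_k) ). -/
open MeasureTheory ProbabilityTheory Finset
open scoped NNReal ENNReal

/-! ### Auxiliary: moments of the Poisson distribution -/

/-- The falling factorial `n(n-1)⋯(n-k+1)` as a real number. -/
noncomputable def fall (k n : ℕ) : ℝ := ∏ i ∈ Finset.range k, ((n : ℝ) - i)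

lemma fall_nonneg (k n : ℕ) : 0 ≤ fall k n := by
  rcases lt_or_ge n k with h | h
  · have : fall k n = 0 := Finset.prod_eq_zero (Finset.mem_range.2 h) (by simp)
    rw [this]
  · exact Finset.prod_nonneg fun i hi => by
      have : (i : ℝ) ≤ n := by exact_mod_cast le_trans (Finset.mem_range.1 hi).le h
      linarith

lemma fall_mul_factorial (k j : ℕ) :
    fall k (j + k) * (Nat.factorial j : ℝ) = (Nat.factorial (j + k) : ℝ) := by
  induction k with
  | zero => simp [fall]
  | succ k ih =>
    have h1 : fall (k+1) (j + (k+1)) = fall k (j + k) * ((j:ℝ) + k + 1) := by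
      rw [fall, Finset.prod_range_succ', fall]
      push_cast
      congr 1
      · exact Finset.prod_congr rfl fun i _ => by push_cast; ring
      · ring
    rw [h1]
    have h2 : (Nat.factorial (j + (k+1)) : ℝ) = ((j:ℝ) + k + 1) * (Nat.factorial (j + k) : ℝ) := by
      have : j + (k+1) = (j + k) + 1 := by ring
      rw [this, Nat.factorial_succ]
      push_cast
      ring
    rw [h2, ← ih]
    ring

lemma hasSum_pois_fall (r : ℝ≥0) (k : ℕ) :
    HasSum (fun n => poissonPMFReal r n * fall k n) ((r : ℝ) ^ k) := by
  have hinj : Function.Injective (· + k : ℕ → ℕ) := add_left_injective k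
  refine (Function.Injective.hasSum_iff hinj ?_).mp ?_
  · intro n hn
    have hnk : n < k := by
      by_contra h
      exact hn ⟨n - k, by show n - k + k = n; omega⟩
    have : fall k n = 0 := Finset.prod_eq_zero (Finset.mem_range.2 hnk) (by simp)
    simp [this]
  · have heq : (fun n => poissonPMFReal r n * fall k n) ∘ (· + k)
        = fun j => (r:ℝ)^k * poissonPMFReal r j := by
      funext j
      simp only [Function.comp_apply, poissonPMFReal]
      have hfac := fall_mul_factorial k j
      have hj : (Nat.factorial j : ℝ) ≠ 0 := by exact_mod_cast Nat.factorial_ne_zero j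
      have hjk : (Nat.factorial (j + k) : ℝ) ≠ 0 := by exact_mod_cast Nat.factorial_ne_zero (j+k)
      field_simp
      rw [pow_add, ← hfac]
      ring
    rw [heq]
    simpa [poissonPMFReal] using (poissonPMFRealSum r).mul_left ((r:ℝ)^k)

lemma poissonPMF_toReal (r : ℝ≥0) (n : ℕ) :
    ((poissonPMF r n : ℝ≥0∞)).toReal = poissonPMFReal r n := by
  rw [show (poissonPMF r n : ℝ≥0∞) = ENNReal.ofReal (poissonPMFReal r n) from rfl]
  exact ENNReal.toReal_ofReal poissonPMFReal_nonneg

lemma integrable_poisson_of_summable {r : ℝ≥0} {f : ℕ → ℝ}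
    (h : Summable (fun n => poissonPMFReal r n * |f n|)) :
    Integrable f (poissonMeasure r) := by
  constructor
  · exact Measurable.aestronglyMeasurable (measurable_from_nat (f := f))
  · rw [HasFiniteIntegral, lintegral_countable']
    have hnn : ∀ n, 0 ≤ poissonPMFReal r n * |f n| := fun n =>
      mul_nonneg poissonPMFReal_nonneg (abs_nonneg _)
    calc ∑' n, (‖f n‖₊ : ℝ≥0∞) * (poissonMeasure r) {n}
        = ∑' n, ENNReal.ofReal (poissonPMFReal r n * |f n|) := by
          congr 1; funext n
          rw [poissonMeasure_singleton, show ENNReal.ofReal (Real.exp (-(r:ℝ)) * (r:ℝ) ^ n / (n.factorial : ℝ)) = (poissonPMF r n : ℝ≥0∞) from rfl]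
          rw [ENNReal.ofReal_mul poissonPMFReal_nonneg,
            show (poissonPMF r n : ℝ≥0∞) = ENNReal.ofReal (poissonPMFReal r n) from rfl,
            ← enorm_eq_nnnorm, Real.enorm_eq_ofReal_abs, mul_comm]
      _ = ENNReal.ofReal (∑' n, poissonPMFReal r n * |f n|) := by
          rw [ENNReal.ofReal_tsum_of_nonneg hnn h]
      _ < ⊤ := ENNReal.ofReal_lt_top

lemma integrable_fall (r : ℝ≥0) (k : ℕ) : Integrable (fun n => fall k n) (poissonMeasure r) := by
  apply integrable_poisson_of_summable
  have := (hasSum_pois_fall r k).summable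
  refine this.congr fun n => ?_
  rw [abs_of_nonneg (fall_nonneg k n)]

lemma integral_fall (r : ℝ≥0) (k : ℕ) :
    ∫ n, fall k n ∂(poissonMeasure r) = (r : ℝ) ^ k := by
  rw [integral_poissonMeasure' (integrable_fall r k)]
  have : (fun n : ℕ => (Real.exp (-(r:ℝ)) * (r:ℝ) ^ n / (n.factorial : ℝ)) • fall k n)
      = fun n => poissonPMFReal r n * fall k n := by
    funext n; simp [poissonPMFReal, smul_eq_mul]
  rw [this]
  exact (hasSum_pois_fall r k).tsum_eq

section comb
variable {r : ℝ≥0} {g : ℕ → ℝ} {c3 c2 c1 c0 : ℝ}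
  (hg : ∀ n : ℕ, g n = c3 * fall 3 n + c2 * fall 2 n + c1 * fall 1 n + c0)

include hg

lemma integrable_comb : Integrable g (poissonMeasure r) := by
  have h3 : Integrable (fun n => c3 * fall 3 n) (poissonMeasure r) :=
    (integrable_fall r 3).const_mul c3
  have h2 : Integrable (fun n => c2 * fall 2 n) (poissonMeasure r) :=
    (integrable_fall r 2).const_mul c2
  have h1 : Integrable (fun n => c1 * fall 1 n) (poissonMeasure r) :=
    (integrable_fall r 1).const_mul c1
  have := ((h3.add h2).add h1).add (integrable_const (μ := poissonMeasure r) c0)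
  exact this.congr (Filter.Eventually.of_forall fun n => (hg n).symm)

lemma integral_comb :
    ∫ n, g n ∂(poissonMeasure r) = c3 * (r:ℝ)^3 + c2 * (r:ℝ)^2 + c1 * (r:ℝ) + c0 := by
  have h3 : Integrable (fun n => c3 * fall 3 n) (poissonMeasure r) :=
    (integrable_fall r 3).const_mul c3
  have h2 : Integrable (fun n => c2 * fall 2 n) (poissonMeasure r) :=
    (integrable_fall r 2).const_mul c2
  have h1 : Integrable (fun n => c1 * fall 1 n) (poissonMeasure r) :=
    (integrable_fall r 1).const_mul c1
  have h32 : Integrable (fun n => c3 * fall 3 n + c2 * fall 2 n) (poissonMeasure r) := h3.add h2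
  have h321 : Integrable (fun n => c3 * fall 3 n + c2 * fall 2 n + c1 * fall 1 n)
      (poissonMeasure r) := h32.add h1
  have heq : ∫ n, g n ∂(poissonMeasure r)
      = ∫ n, (c3 * fall 3 n + c2 * fall 2 n + c1 * fall 1 n + c0) ∂(poissonMeasure r) :=
    integral_congr_ae (Filter.Eventually.of_forall hg)
  rw [heq, integral_add h321 (integrable_const c0), integral_add h32 h1, integral_add h3 h2,
    integral_const_mul, integral_const_mul, integral_const_mul,
    integral_fall, integral_fall, integral_fall, integral_const]
  have : IsProbabilityMeasure (poissonMeasure r) := inferInstance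
  simp [pow_one]

end comb

/-! ### The coordinate functions -/

/-- `Ff μ j k n`: factor at coordinate `k` for the term `Ẋ_j ∏ X_k(X_k-1)`. -/
noncomputable def Ff {m : ℕ} (μ : Fin m → ℝ≥0) (j k : Fin m) (n : ℕ) : ℝ :=
  if k = j then ((n:ℝ) - (μ j : ℝ)) * ((n:ℝ) * ((n:ℝ) - 1)) else (n:ℝ) * ((n:ℝ) - 1)

/-- `Gg μ j k n`: factor at coordinate `k` for the term `Ẋ_j ∏ X_k²`. -/
noncomputable def Gg {m : ℕ} (μ : Fin m → ℝ≥0) (j k : Fin m) (n : ℕ) : ℝ :=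
  if k = j then ((n:ℝ) - (μ j : ℝ)) * (n:ℝ)^2 else (n:ℝ)^2

lemma prod_Ff {m : ℕ} (μ : Fin m → ℝ≥0) (j : Fin m) (x : Fin m → ℕ) :
    ∏ k, Ff μ j k (x k) = ((x j : ℝ) - (μ j : ℝ)) * ∏ k, ((x k : ℝ) * ((x k : ℝ) - 1)) := by
  rw [← Finset.mul_prod_erase univ (fun k => Ff μ j k (x k)) (Finset.mem_univ j),
      ← Finset.mul_prod_erase univ (fun k => (x k : ℝ) * ((x k : ℝ) - 1)) (Finset.mem_univ j),
      show Ff μ j j (x j) = ((x j:ℝ) - (μ j:ℝ)) * ((x j:ℝ) * ((x j:ℝ) - 1)) from if_pos rfl,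
      Finset.prod_congr rfl fun k hk =>
        show Ff μ j k (x k) = (x k:ℝ) * ((x k:ℝ) - 1) from if_neg (Finset.ne_of_mem_erase hk)]
  ring

lemma prod_Gg {m : ℕ} (μ : Fin m → ℝ≥0) (j : Fin m) (x : Fin m → ℕ) :
    ∏ k, Gg μ j k (x k) = ((x j : ℝ) - (μ j : ℝ)) * ∏ k, (x k : ℝ)^2 := by
  rw [← Finset.mul_prod_erase univ (fun k => Gg μ j k (x k)) (Finset.mem_univ j),
      ← Finset.mul_prod_erase univ (fun k => (x k : ℝ)^2) (Finset.mem_univ j),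
      show Gg μ j j (x j) = ((x j:ℝ) - (μ j:ℝ)) * (x j:ℝ)^2 from if_pos rfl,
      Finset.prod_congr rfl fun k hk =>
        show Gg μ j k (x k) = (x k:ℝ)^2 from if_neg (Finset.ne_of_mem_erase hk)]
  ring

lemma integrable_Ff {m : ℕ} (μ : Fin m → ℝ≥0) (j k : Fin m) :
    Integrable (Ff μ j k) (poissonMeasure (μ k)) := by
  rcases eq_or_ne k j with rfl | h
  · refine integrable_comb (c3 := 1) (c2 := 2 - (μ k:ℝ)) (c1 := 0) (c0 := 0) fun n => ?_
    simp only [Ff, eq_self_iff_true, if_true, fall, Finset.prod_range_succ, Finset.prod_range_zero]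
    ring
  · refine integrable_comb (c3 := 0) (c2 := 1) (c1 := 0) (c0 := 0) fun n => ?_
    simp only [Ff, if_neg h, fall, Finset.prod_range_succ, Finset.prod_range_zero]
    ring

lemma integrable_Gg {m : ℕ} (μ : Fin m → ℝ≥0) (j k : Fin m) :
    Integrable (Gg μ j k) (poissonMeasure (μ k)) := by
  rcases eq_or_ne k j with rfl | h
  · refine integrable_comb (c3 := 1) (c2 := 3 - (μ k:ℝ)) (c1 := 1 - (μ k:ℝ)) (c0 := 0) fun n => ?_
    simp only [Gg, eq_self_iff_true, if_true, fall, Finset.prod_range_succ, Finset.prod_range_zero]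
    ring
  · refine integrable_comb (c3 := 0) (c2 := 1) (c1 := 1) (c0 := 0) fun n => ?_
    simp only [Gg, if_neg h, fall, Finset.prod_range_succ, Finset.prod_range_zero]
    ring

lemma integral_Ff_self {m : ℕ} (μ : Fin m → ℝ≥0) (j : Fin m) :
    ∫ n, Ff μ j j n ∂(poissonMeasure (μ j)) = 2 * (μ j : ℝ)^2 := by
  rw [integral_comb (c3 := 1) (c2 := 2 - (μ j:ℝ)) (c1 := 0) (c0 := 0) fun n => by
    simp only [Ff, eq_self_iff_true, if_true, fall, Finset.prod_range_succ, Finset.prod_range_zero]; ring]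
  ring

lemma integral_Ff_ne {m : ℕ} (μ : Fin m → ℝ≥0) {j k : Fin m} (h : k ≠ j) :
    ∫ n, Ff μ j k n ∂(poissonMeasure (μ k)) = (μ k : ℝ)^2 := by
  rw [integral_comb (c3 := 0) (c2 := 1) (c1 := 0) (c0 := 0) fun n => by
    simp only [Ff, if_neg h, fall, Finset.prod_range_succ, Finset.prod_range_zero]; ring]
  ring

lemma integral_Gg_self {m : ℕ} (μ : Fin m → ℝ≥0) (j : Fin m) :
    ∫ n, Gg μ j j n ∂(poissonMeasure (μ j)) = 2 * (μ j : ℝ)^2 + (μ j : ℝ) := by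
  rw [integral_comb (c3 := 1) (c2 := 3 - (μ j:ℝ)) (c1 := 1 - (μ j:ℝ)) (c0 := 0) fun n => by
    simp only [Gg, eq_self_iff_true, if_true, fall, Finset.prod_range_succ, Finset.prod_range_zero]; ring]
  ring

lemma integral_Gg_ne {m : ℕ} (μ : Fin m → ℝ≥0) {j k : Fin m} (h : k ≠ j) :
    ∫ n, Gg μ j k n ∂(poissonMeasure (μ k)) = (μ k : ℝ) + (μ k : ℝ)^2 := by
  rw [integral_comb (c3 := 0) (c2 := 1) (c1 := 1) (c0 := 0) fun n => by
    simp only [Gg, if_neg h, fall, Finset.prod_range_succ, Finset.prod_range_zero]; ring]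
  ring

lemma integrable_pi_prod {m : ℕ} (μ : Fin m → ℝ≥0) (f : Fin m → ℕ → ℝ)
    (hf : ∀ i, Integrable (f i) (poissonMeasure (μ i))) :
    Integrable (fun x : Fin m → ℕ => ∏ i, f i (x i)) (poissonPi μ) :=
  MeasureTheory.Integrable.fintype_prod (μ := fun i => poissonMeasure (μ i)) hf

lemma integral_pi_prod {m : ℕ} (μ : Fin m → ℝ≥0) (f : Fin m → ℕ → ℝ) :
    ∫ x : Fin m → ℕ, ∏ i, f i (x i) ∂(poissonPi μ)
      = ∏ i, ∫ n, f i n ∂(poissonMeasure (μ i)) :=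
  MeasureTheory.integral_fintype_prod_eq_prod (μ := fun i => poissonMeasure (μ i)) f

theorem expectation_V_X (m : ℕ) (hm : 2 ≤ m) (μ : Fin m → ℝ≥0) (hμ : ∀ j, 0 < μ j) :
    ∫ x : Fin m → ℕ, ((∏ j, (μ j : ℝ)) * ∑ j, ((μ j : ℝ))⁻¹ * ((x j : ℝ) - (μ j : ℝ))) * (∏ j, ((x j : ℝ) * ((x j : ℝ) - 1)) - ∏ j, (x j : ℝ) ^ 2) ∂(poissonPi μ)
      = (∏ j, (μ j : ℝ)) ^ 2 * (2 * (∏ j, (μ j : ℝ)) * (∑ j, ((μ j : ℝ))⁻¹) - ∑ j, ((μ j : ℝ))⁻¹ * (1 + 2 * (μ j : ℝ)) * ∏ k ∈ univ.erase j, (1 + (μ k : ℝ))) := by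
  set P : ℝ := ∏ j, (μ j : ℝ) with hP
  -- rewrite the integrand as a finite sum of products over coordinates
  have hrw : (fun x : Fin m → ℕ =>
        ((∏ j, (μ j : ℝ)) * ∑ j, ((μ j : ℝ))⁻¹ * ((x j : ℝ) - (μ j : ℝ))) *
          (∏ j, ((x j : ℝ) * ((x j : ℝ) - 1)) - ∏ j, (x j : ℝ) ^ 2))
      = fun x : Fin m → ℕ => ∑ j,
          ((P * ((μ j : ℝ))⁻¹) * ∏ k, Ff μ j k (x k)
            - (P * ((μ j : ℝ))⁻¹) * ∏ k, Gg μ j k (x k)) := by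
    funext x
    rw [Finset.mul_sum, Finset.sum_mul]
    refine Finset.sum_congr rfl fun j _ => ?_
    rw [prod_Ff, prod_Gg]
    ring
  rw [hrw]
  have hintF : ∀ j : Fin m, Integrable (fun x : Fin m → ℕ => ∏ k, Ff μ j k (x k)) (poissonPi μ) :=
    fun j => integrable_pi_prod μ _ (integrable_Ff μ j)
  have hintG : ∀ j : Fin m, Integrable (fun x : Fin m → ℕ => ∏ k, Gg μ j k (x k)) (poissonPi μ) :=
    fun j => integrable_pi_prod μ _ (integrable_Gg μ j)
  have hsub : ∀ j : Fin m, Integrable (fun x : Fin m → ℕ =>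
      (P * ((μ j : ℝ))⁻¹) * ∏ k, Ff μ j k (x k)
        - (P * ((μ j : ℝ))⁻¹) * ∏ k, Gg μ j k (x k)) (poissonPi μ) :=
    fun j => ((hintF j).const_mul _).sub ((hintG j).const_mul _)
  rw [integral_finset_sum univ (fun j _ => hsub j)]
  have hterm : ∀ j : Fin m,
      ∫ x : Fin m → ℕ, ((P * ((μ j : ℝ))⁻¹) * ∏ k, Ff μ j k (x k)
          - (P * ((μ j : ℝ))⁻¹) * ∏ k, Gg μ j k (x k)) ∂(poissonPi μ)
        = (P * ((μ j : ℝ))⁻¹) * (2 * (μ j : ℝ)^2 * ∏ k ∈ univ.erase j, (μ k : ℝ)^2)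
          - (P * ((μ j : ℝ))⁻¹) * ((2 * (μ j : ℝ)^2 + (μ j : ℝ)) *
              ∏ k ∈ univ.erase j, ((μ k : ℝ) + (μ k : ℝ)^2)) := by
    intro j
    have h1 : Integrable (fun x : Fin m → ℕ =>
        (P * ((μ j : ℝ))⁻¹) * ∏ k, Ff μ j k (x k)) (poissonPi μ) := (hintF j).const_mul _
    have h2 : Integrable (fun x : Fin m → ℕ =>
        (P * ((μ j : ℝ))⁻¹) * ∏ k, Gg μ j k (x k)) (poissonPi μ) := (hintG j).const_mul _
    rw [integral_sub h1 h2,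
      integral_const_mul, integral_const_mul, integral_pi_prod, integral_pi_prod,
      ← Finset.mul_prod_erase univ (fun k => ∫ n, Ff μ j k n ∂(poissonMeasure (μ k)))
        (Finset.mem_univ j),
      ← Finset.mul_prod_erase univ (fun k => ∫ n, Gg μ j k n ∂(poissonMeasure (μ k)))
        (Finset.mem_univ j),
      integral_Ff_self, integral_Gg_self,
      Finset.prod_congr rfl (fun k hk => integral_Ff_ne μ (Finset.ne_of_mem_erase hk)),
      Finset.prod_congr rfl (fun k hk => integral_Gg_ne μ (Finset.ne_of_mem_erase hk))]
  rw [Finset.sum_congr rfl fun j _ => hterm j]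
  -- now pure algebra
  simp only [mul_sub, Finset.mul_sum]
  rw [← Finset.sum_sub_distrib]
  refine Finset.sum_congr rfl fun j _ => ?_
  have hpj : (μ j : ℝ) ≠ 0 := ne_of_gt (by exact_mod_cast hμ j)
  have hPj : P = (μ j : ℝ) * ∏ k ∈ univ.erase j, (μ k : ℝ) :=
    (Finset.mul_prod_erase univ (fun k => (μ k : ℝ)) (Finset.mem_univ j)).symm
  have hQ : ∏ k ∈ univ.erase j, (μ k : ℝ)^2 = (∏ k ∈ univ.erase j, (μ k : ℝ))^2 := by
    rw [Finset.prod_pow]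
  have hR : ∏ k ∈ univ.erase j, ((μ k : ℝ) + (μ k : ℝ)^2)
      = (∏ k ∈ univ.erase j, (μ k : ℝ)) * ∏ k ∈ univ.erase j, (1 + (μ k : ℝ)) := by
    rw [← Finset.prod_mul_distrib]
    exact Finset.prod_congr rfl fun k _ => by ring
  rw [hQ, hR, hPj]
  field_simp
  ring
end

section
/- Let Z = ∑_{j=1}^m ∏_{k≠j} X_k − p_1 s_1 and V = p_1 ∑_{j=1}^m μ_j^{-1}Ẋ_j. Then E[Z V] = p_1²(s_1² − s_2). -/
open MeasureTheory ProbabilityTheory Finset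
open scoped NNReal
open Real
open scoped ENNReal


lemma pois_shift1 (r : ℝ≥0) (n : ℕ) :
    ((n:ℝ)+1) * poissonPMFReal r (n+1) = r * poissonPMFReal r n := by
  simp only [poissonPMFReal, pow_succ, Nat.factorial_succ, Nat.cast_mul, Nat.cast_add,
    Nat.cast_one]
  have hf : (Nat.factorial n : ℝ) ≠ 0 := Nat.cast_ne_zero.mpr n.factorial_ne_zero
  have h : ((n:ℝ)+1) ≠ 0 := by positivity
  field_simp

lemma pois_hasSum_one (r : ℝ≥0) : HasSum (poissonPMFReal r) 1 := poissonPMFRealSum r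

lemma pois_hasSum_id (r : ℝ≥0) : HasSum (fun n : ℕ => (n:ℝ) * poissonPMFReal r n) (r:ℝ) := by
  have h : HasSum (fun n : ℕ => ((n:ℝ)+1) * poissonPMFReal r (n+1)) (r:ℝ) := by
    simp only [pois_shift1]
    simpa using (pois_hasSum_one r).mul_left (r:ℝ)
  have := (hasSum_nat_add_iff (f := fun n : ℕ => (n:ℝ) * poissonPMFReal r n) 1).mp (by
    convert h using 2 with n
    · rfl
    push_cast
    ring)
  simpa using this

lemma pois_shift2 (r : ℝ≥0) (n : ℕ) :
    ((n:ℝ)+2) * ((n:ℝ)+1) * poissonPMFReal r (n+2) = (r:ℝ)^2 * poissonPMFReal r n := by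
  have h1 := pois_shift1 r (n+1)
  have h2 := pois_shift1 r n
  rw [show n+1+1 = n+2 from rfl] at h1
  push_cast at h1 h2 ⊢
  linear_combination ((n:ℝ)+1) * h1 + (r:ℝ) * h2

lemma pois_hasSum_sq' (r : ℝ≥0) :
    HasSum (fun n : ℕ => (n:ℝ) * ((n:ℝ)-1) * poissonPMFReal r n) ((r:ℝ)^2) := by
  have h : HasSum (fun n : ℕ => ((n:ℝ)+2) * ((n:ℝ)+1) * poissonPMFReal r (n+2)) ((r:ℝ)^2) := by
    simp only [pois_shift2]
    simpa using (pois_hasSum_one r).mul_left ((r:ℝ)^2)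
  have := (hasSum_nat_add_iff (f := fun n : ℕ => (n:ℝ) * ((n:ℝ)-1) * poissonPMFReal r n) 2).mp (by
    convert h using 2 with n
    · rfl
    push_cast
    ring)
  simpa [Finset.sum_range_succ] using this


lemma poissonPMF_apply (r : ℝ≥0) (n : ℕ) :
    poissonPMF r n = ENNReal.ofReal (poissonPMFReal r n) := rfl

lemma poissonMeasure_eq_toMeasure (r : ℝ≥0) : poissonMeasure r = (poissonPMF r).toMeasure :=
  Measure.ext_of_singleton fun n => by
    rw [PMF.toMeasure_apply_singleton _ _ (MeasurableSet.singleton n), poissonMeasure_singleton]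
    rfl

lemma pois_integrable (r : ℝ≥0) (f : ℕ → ℝ)
    (h : Summable (fun n => |f n| * poissonPMFReal r n)) :
    Integrable f (poissonMeasure r) := by
  refine ⟨(measurable_of_countable f).aestronglyMeasurable, ?_⟩
  rw [HasFiniteIntegral, lintegral_countable']
  have key : ∀ n : ℕ, ‖f n‖ₑ * poissonMeasure r {n}
      = ENNReal.ofReal (|f n| * poissonPMFReal r n) := by
    intro n
    rw [show poissonMeasure r {n} = poissonPMF r n by
      rw [poissonMeasure_eq_toMeasure]
      exact (poissonPMF r).toMeasure_apply_singleton n (MeasurableSet.singleton n),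
      poissonPMF_apply, ENNReal.ofReal_mul (abs_nonneg _)]
    congr 1
    simp [Real.enorm_eq_ofReal_abs]
  simp_rw [key]
  rw [← ENNReal.ofReal_tsum_of_nonneg (fun n => mul_nonneg (abs_nonneg _)
    poissonPMFReal_nonneg) h]
  exact ENNReal.ofReal_lt_top

lemma pois_integral (r : ℝ≥0) (f : ℕ → ℝ) (hf : Integrable f (poissonMeasure r)) :
    ∫ n, f n ∂(poissonMeasure r) = ∑' n, poissonPMFReal r n * f n := by
  rw [show poissonMeasure r = (poissonPMF r).toMeasure from poissonMeasure_eq_toMeasure r] at hf ⊢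
  rw [PMF.integral_eq_tsum _ f hf]
  congr 1 with n
  rw [poissonPMF_apply, ENNReal.toReal_ofReal poissonPMFReal_nonneg, smul_eq_mul]

lemma pois_hasSum_idcent (r : ℝ≥0) :
    HasSum (fun n : ℕ => ((n:ℝ) * ((n:ℝ) - r)) * poissonPMFReal r n) (r:ℝ) := by
  have h := (pois_hasSum_sq' r).add ((pois_hasSum_id r).mul_left (1 - (r:ℝ)))
  have e : (r:ℝ)^2 + (1 - (r:ℝ)) * r = r := by ring
  rw [e] at h
  convert h using 2 with n
  ring

lemma pois_int_id (r : ℝ≥0) : Integrable (fun n : ℕ => (n:ℝ)) (poissonMeasure r) := by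
  apply pois_integrable
  have := (pois_hasSum_id r).summable
  convert this using 2 with n
  rw [abs_of_nonneg (by positivity)]

lemma pois_int_cent (r : ℝ≥0) :
    Integrable (fun n : ℕ => (n:ℝ) - r) (poissonMeasure r) :=
  (pois_int_id r).sub (integrable_const _)

lemma pois_int_idcent (r : ℝ≥0) :
    Integrable (fun n : ℕ => (n:ℝ) * ((n:ℝ) - r)) (poissonMeasure r) := by
  apply pois_integrable
  refine Summable.of_nonneg_of_le
    (f := fun n : ℕ => (n:ℝ) * ((n:ℝ)-1) * poissonPMFReal r n
      + (1 + (r:ℝ)) * ((n:ℝ) * poissonPMFReal r n))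
    (fun n => mul_nonneg (abs_nonneg _) poissonPMFReal_nonneg) ?_ ?_
  · intro n
    have hb : |(n:ℝ) * ((n:ℝ) - r)| ≤ (n:ℝ) * ((n:ℝ)-1) + (1 + (r:ℝ)) * n := by
      rw [abs_mul, abs_of_nonneg (n.cast_nonneg)]
      have h1 : |(n:ℝ) - r| ≤ (n:ℝ) + r := by
        have := abs_sub (n:ℝ) (r:ℝ)
        calc |(n:ℝ) - r| ≤ |(n:ℝ)| + |(r:ℝ)| := abs_sub _ _
          _ = (n:ℝ) + r := by
            rw [abs_of_nonneg n.cast_nonneg, abs_of_nonneg r.coe_nonneg]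
      nlinarith [n.cast_nonneg (α := ℝ)]
    calc |(n:ℝ) * ((n:ℝ) - r)| * poissonPMFReal r n
        ≤ ((n:ℝ) * ((n:ℝ)-1) + (1 + (r:ℝ)) * n) * poissonPMFReal r n :=
          mul_le_mul_of_nonneg_right hb poissonPMFReal_nonneg
      _ = (n:ℝ) * ((n:ℝ)-1) * poissonPMFReal r n
          + (1 + (r:ℝ)) * ((n:ℝ) * poissonPMFReal r n) := by ring
  · exact (pois_hasSum_sq' r).summable.add
      (((pois_hasSum_id r).summable).mul_left _)

lemma pois_integral_id (r : ℝ≥0) : ∫ n, (n:ℝ) ∂(poissonMeasure r) = r := by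
  rw [pois_integral r _ (pois_int_id r)]
  rw [← (pois_hasSum_id r).tsum_eq]
  exact tsum_congr fun n => by ring

lemma pois_integral_cent (r : ℝ≥0) : ∫ n, ((n:ℝ) - r) ∂(poissonMeasure r) = 0 := by
  rw [integral_sub (pois_int_id r) (integrable_const _), pois_integral_id,
    integral_const]
  simp

lemma pois_integral_idcent (r : ℝ≥0) :
    ∫ n, (n:ℝ) * ((n:ℝ) - r) ∂(poissonMeasure r) = r := by
  rw [pois_integral r _ (pois_int_idcent r)]
  have := (pois_hasSum_idcent r).tsum_eq
  conv_rhs => rw [← this]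
  exact tsum_congr fun n => by ring


/-- Type synonym for `ℕ` carrying the Poisson measure as volume. -/
def PoisSp (_r : ℝ≥0) : Type := ℕ

instance (r : ℝ≥0) : MeasurableSpace (PoisSp r) := inferInstanceAs (MeasurableSpace ℕ)
noncomputable instance (r : ℝ≥0) : MeasureSpace (PoisSp r) := ⟨poissonMeasure r⟩
instance (r : ℝ≥0) : IsProbabilityMeasure (volume : Measure (PoisSp r)) :=
  inferInstanceAs (IsProbabilityMeasure (poissonMeasure r))

lemma integral_poissonPi {m : ℕ} (μ : Fin m → ℝ≥0) (g : (k : Fin m) → ℕ → ℝ) :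
    ∫ x : Fin m → ℕ, ∏ k, g k (x k) ∂(poissonPi μ)
      = ∏ k, ∫ n, g k n ∂(poissonMeasure (μ k)) :=
  MeasureTheory.integral_fintype_prod_eq_prod (ι := Fin m)
    (E := fun _ => ℕ) (f := fun k n => g k n)

lemma integrable_poissonPi {m : ℕ} (μ : Fin m → ℝ≥0) (g : (k : Fin m) → ℕ → ℝ)
    (hg : ∀ k, Integrable (g k) (poissonMeasure (μ k))) :
    Integrable (fun x : Fin m → ℕ => ∏ k, g k (x k)) (poissonPi μ) :=
  MeasureTheory.Integrable.fintype_prod_dep (E := fun _ => ℕ)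
    (f := fun k n => g k n) hg


lemma sum_expand {m : ℕ} (A d w : Fin m → ℝ) (P Q : ℝ) :
    (∑ j, A j - Q) * (P * ∑ l, w l * d l)
      = (∑ j, ∑ l, (P * w l) * (A j * d l)) - ∑ l, (P * Q * w l) * d l := by
  have h1 : ∀ j, ∑ l, (P * w l) * (A j * d l) = A j * (P * ∑ l, w l * d l) := by
    intro j
    rw [Finset.mul_sum, Finset.mul_sum]
    exact Finset.sum_congr rfl fun l _ => by ring
  have h2 : ∑ l, (P * Q * w l) * d l = Q * (P * ∑ l, w l * d l) := by
    rw [Finset.mul_sum, Finset.mul_sum]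
    exact Finset.sum_congr rfl fun l _ => by ring
  simp only [h1, h2, sub_mul, Finset.sum_mul]

theorem expectation_Z_V (m : ℕ) (hm : 2 ≤ m) (μ : Fin m → ℝ≥0) (hμ : ∀ j, 0 < μ j) :
    ∫ x : Fin m → ℕ, (∑ j, (∏ k ∈ univ.erase j, (x k : ℝ)) - (∏ j, (μ j : ℝ)) * ∑ j, ((μ j : ℝ))⁻¹) * ((∏ j, (μ j : ℝ)) * ∑ j, ((μ j : ℝ))⁻¹ * ((x j : ℝ) - (μ j : ℝ))) ∂(poissonPi μ)
      = (∏ j, (μ j : ℝ)) ^ 2 * ((∑ j, ((μ j : ℝ))⁻¹) ^ 2 - (∑ j, ((μ j : ℝ))⁻¹ ^ 2)) := by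
  classical
  have hμ' : ∀ j, ((μ j : ℝ)) ≠ 0 := fun j => ne_of_gt (by exact_mod_cast hμ j)
  set P : ℝ := ∏ j, (μ j : ℝ) with hP
  set S : ℝ := ∑ j, ((μ j : ℝ))⁻¹ with hS
  set g : Fin m → Fin m → (k : Fin m) → ℕ → ℝ :=
    fun j l k n => (if k ∈ univ.erase j then (n:ℝ) else 1)
      * (if k = l then ((n:ℝ) - μ l) else 1) with hg
  set c : Fin m → (k : Fin m) → ℕ → ℝ :=
    fun l k n => if k = l then (n:ℝ) - μ l else 1 with hc
  -- pointwise product identities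
  have hgx : ∀ j l (x : Fin m → ℕ),
      (∏ k, g j l k (x k)) = (∏ k ∈ univ.erase j, (x k : ℝ)) * ((x l : ℝ) - μ l) := by
    intro j l x
    rw [hg]
    simp only
    rw [Finset.prod_mul_distrib]
    congr 1
    · rw [Finset.prod_ite_mem, univ_inter]
    · rw [Finset.prod_ite_eq' univ l (fun k => (x k : ℝ) - μ l)]
      simp
  have hcx : ∀ l (x : Fin m → ℕ), (∏ k, c l k (x k)) = (x l : ℝ) - μ l := by
    intro l x
    rw [hc]
    simp only
    rw [Finset.prod_ite_eq' univ l (fun k => (x k : ℝ) - μ l)]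
    simp
  -- the factor functions, described by cases
  have hgfun : ∀ j l k, g j l k = fun n : ℕ =>
      (if k = j then 1 else (n:ℝ)) * (if k = l then ((n:ℝ) - μ l) else 1) := by
    intro j l k
    funext n
    rw [hg]
    simp only [Finset.mem_erase, Finset.mem_univ, and_true]
    by_cases h : k = j <;> simp [h]
  -- integrability of the factors
  have hgint : ∀ j l k, Integrable (g j l k) (poissonMeasure (μ k)) := by
    intro j l k
    by_cases h2 : k = l
    · subst h2
      by_cases h1 : k = j
      · have h0 : g j k k = fun n : ℕ => (n:ℝ) - μ k := by
          rw [hgfun]; funext n; simp [h1]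
        rw [h0]; exact pois_int_cent (μ k)
      · have h0 : g j k k = fun n : ℕ => (n:ℝ) * ((n:ℝ) - μ k) := by
          rw [hgfun]; funext n; simp [h1]
        rw [h0]; exact pois_int_idcent (μ k)
    · by_cases h1 : k = j
      · have h3 : ¬ j = l := by rw [← h1]; exact h2
        have h0 : g j l k = fun _ : ℕ => (1:ℝ) := by
          rw [hgfun]; funext n; simp [h1, h2, h3]
        rw [h0]; exact integrable_const (1:ℝ)
      · have h0 : g j l k = fun n : ℕ => (n:ℝ) := by
          rw [hgfun]; funext n; simp [h1, h2]
        rw [h0]; exact pois_int_id (μ k)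
  have hcint : ∀ l k, Integrable (c l k) (poissonMeasure (μ k)) := by
    intro l k
    by_cases h2 : k = l
    · subst h2
      have h0 : c k k = fun n : ℕ => (n:ℝ) - μ k := by
        rw [hc]; funext n; simp
      rw [h0]; exact pois_int_cent (μ k)
    · have h0 : c l k = fun _ : ℕ => (1:ℝ) := by
        rw [hc]; funext n; simp [h2]
      rw [h0]; exact integrable_const (1:ℝ)
  -- integrability of the product terms
  have hTint : ∀ j l, Integrable (fun x : Fin m → ℕ => ∏ k, g j l k (x k)) (poissonPi μ) :=
    fun j l => integrable_poissonPi μ (g j l) (hgint j l)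
  have hCint : ∀ l, Integrable (fun x : Fin m → ℕ => ∏ k, c l k (x k)) (poissonPi μ) :=
    fun l => integrable_poissonPi μ (c l) (hcint l)
  -- values of the product integrals
  have hT : ∀ j l, ∫ x, (∏ k, g j l k (x k)) ∂(poissonPi μ)
      = if l = j then 0 else P * ((μ j : ℝ))⁻¹ := by
    intro j l
    rw [integral_poissonPi]
    by_cases h : l = j
    · subst h
      rw [if_pos rfl]
      apply Finset.prod_eq_zero (mem_univ l)
      have h0 : g l l l = fun n : ℕ => (n:ℝ) - μ l := by
        rw [hgfun]; funext n; simp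
      rw [h0, pois_integral_cent]
    · rw [if_neg h]
      have step : ∀ k, ∫ n, g j l k n ∂(poissonMeasure (μ k))
          = if k = j then 1 else (μ k : ℝ) := by
        intro k
        by_cases h1 : k = j
        · rw [if_pos h1]
          have hkl : ¬ k = l := by rw [h1]; exact fun e => h e.symm
          have h3 : ¬ j = l := by rw [← h1]; exact hkl
          have h0 : g j l k = fun _ : ℕ => (1:ℝ) := by
            rw [hgfun]; funext n; simp [h1, hkl, h3]
          rw [h0, integral_const]
          simp
        · rw [if_neg h1]
          by_cases h2 : k = l
          · subst h2
            have h0 : g j k k = fun n : ℕ => (n:ℝ) * ((n:ℝ) - μ k) := by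
              rw [hgfun]; funext n; simp [h1]
            rw [h0, pois_integral_idcent]
          · have h0 : g j l k = fun n : ℕ => (n:ℝ) := by
              rw [hgfun]; funext n; simp [h1, h2]
            rw [h0, pois_integral_id]
      have hprod : ∏ k, (if k = j then (1:ℝ) else (μ k : ℝ)) = P * ((μ j : ℝ))⁻¹ := by
        have e1 : (∏ k ∈ univ.erase j, (if k = j then (1:ℝ) else (μ k : ℝ)))
            * (if j = j then (1:ℝ) else (μ j : ℝ))
            = ∏ k, (if k = j then (1:ℝ) else (μ k : ℝ)) :=
          Finset.prod_erase_mul univ _ (mem_univ j)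
        rw [← e1, if_pos rfl, mul_one,
          Finset.prod_congr rfl fun k hk => if_neg (Finset.ne_of_mem_erase hk)]
        have h2 : (∏ k ∈ univ.erase j, (μ k : ℝ)) * (μ j : ℝ) = P := by
          rw [hP]; exact Finset.prod_erase_mul univ (fun k => (μ k : ℝ)) (mem_univ j)
        rw [← h2, mul_assoc, mul_inv_cancel₀ (hμ' j), mul_one]
      rw [Finset.prod_congr rfl fun k _ => step k, hprod]
  have hC : ∀ l, ∫ x, (∏ k, c l k (x k)) ∂(poissonPi μ) = 0 := by
    intro l
    rw [integral_poissonPi]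
    apply Finset.prod_eq_zero (mem_univ l)
    have h0 : c l l = fun n : ℕ => (n:ℝ) - μ l := by
      rw [hc]; funext n; simp
    rw [h0, pois_integral_cent]
  -- rewrite the integrand
  have key : (fun x : Fin m → ℕ =>
      (∑ j, (∏ k ∈ univ.erase j, (x k : ℝ)) - P * S)
        * (P * ∑ j, ((μ j : ℝ))⁻¹ * ((x j : ℝ) - μ j)))
      = fun x => (∑ j, ∑ l, (P * ((μ l : ℝ))⁻¹) * ∏ k, g j l k (x k))
        - ∑ l, (P * (P * S) * ((μ l : ℝ))⁻¹) * ∏ k, c l k (x k) := by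
    funext x
    simp only [hgx, hcx]
    exact sum_expand (fun j => ∏ k ∈ univ.erase j, (x k : ℝ))
      (fun l => (x l : ℝ) - μ l) (fun l => ((μ l : ℝ))⁻¹) P (P * S)
  rw [key]
  rw [integral_sub
    (integrable_finset_sum _ fun j _ => integrable_finset_sum _ fun l _ =>
      (hTint j l).const_mul _)
    (integrable_finset_sum _ fun l _ => (hCint l).const_mul _)]
  rw [integral_finset_sum _ fun j _ => integrable_finset_sum _ fun l _ =>
      (hTint j l).const_mul _]
  rw [Finset.sum_congr rfl fun j _ =>
    integral_finset_sum univ fun l _ => (hTint j l).const_mul _]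
  rw [integral_finset_sum _ fun l _ => (hCint l).const_mul _]
  simp only [integral_const_mul]
  simp only [hT, hC, mul_zero, Finset.sum_const_zero, sub_zero]
  -- final algebra
  have inner : ∀ j, ∑ l, (P * ((μ l : ℝ))⁻¹) * (if l = j then 0 else P * ((μ j : ℝ))⁻¹)
      = P * P * S * ((μ j : ℝ))⁻¹ - P * P * (((μ j : ℝ))⁻¹)^2 := by
    intro j
    have hterm : ∀ l ∈ univ, (P * ((μ l : ℝ))⁻¹) * (if l = j then 0 else P * ((μ j : ℝ))⁻¹)
        = (P * P * ((μ j : ℝ))⁻¹) * ((μ l : ℝ))⁻¹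
          - (if l = j then (P * P * ((μ j : ℝ))⁻¹) * ((μ l : ℝ))⁻¹ else 0) := by
      intro l _
      by_cases h : l = j
      · simp [h]
      · simp only [if_neg h]
        ring
    rw [Finset.sum_congr rfl hterm, Finset.sum_sub_distrib, ← Finset.mul_sum,
      Finset.sum_ite_eq' univ j]
    rw [← hS]
    simp only [mem_univ, if_true]
    ring
  rw [Finset.sum_congr rfl fun j _ => inner j, Finset.sum_sub_distrib]
  have h3 : ∑ j, (P * P * S * ((μ j : ℝ))⁻¹) = P * P * S * S := by
    rw [← Finset.mul_sum, ← hS]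
  have h4 : ∑ j, P * P * (((μ j : ℝ))⁻¹)^2 = P * P * ∑ j, ((μ j : ℝ))⁻¹^2 := by
    rw [← Finset.mul_sum]
  rw [h3, h4]
  ring
end
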